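/- arXiv:1108.4178 — 5 statements merged into one kernel-verified Lean document; each statement's English description precedes it below -/
import Mathlib

section
/- Let p be a Wolstenholme prime. Then C(2p-1, p-1) ≡ 1 - 2p·∑_{k=1}^{p-1} 1/k - 2p²·∑_{k=1}^{p-1} 1/k² (mod p⁷). -/
set_option linter.unusedSectionVars false
set_option maxHeartbeats 1000000

section
variable {p : ℕ} [hp : Fact p.Prime]

/-- `x` has `p`-adic valuation at least `n`. -/
def Mp (p : ℕ) (n : ℕ) (x : ℚ) : Prop := padicNorm p x ≤ (p:ℚ)^(-(n:ℤ))

lemma Mp_zero (n : ℕ) : Mp p n 0 := by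
  unfold Mp
  rw [padicNorm.zero]
  positivity

lemma Mp_mono {m n : ℕ} (h : m ≤ n) {x : ℚ} (hx : Mp p n x) : Mp p m x := by
  refine hx.trans ?_
  have h1 : (1:ℚ) ≤ (p:ℚ) := by exact_mod_cast hp.out.one_lt.le
  apply zpow_le_zpow_right₀ h1
  omega

lemma Mp_add {n : ℕ} {x y : ℚ} (hx : Mp p n x) (hy : Mp p n y) : Mp p n (x + y) :=
  le_trans padicNorm.nonarchimedean (max_le hx hy)

lemma Mp_neg {n : ℕ} {x : ℚ} (hx : Mp p n x) : Mp p n (-x) := by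
  unfold Mp at *; rwa [padicNorm.neg]

lemma Mp_sub {n : ℕ} {x y : ℚ} (hx : Mp p n x) (hy : Mp p n y) : Mp p n (x - y) := by
  rw [sub_eq_add_neg]; exact Mp_add hx (Mp_neg hy)

lemma Mp_mul {a b : ℕ} {x y : ℚ} (hx : Mp p a x) (hy : Mp p b y) : Mp p (a + b) (x * y) := by
  unfold Mp at *
  rw [padicNorm.mul]
  calc padicNorm p x * padicNorm p y ≤ (p:ℚ)^(-(a:ℤ)) * (p:ℚ)^(-(b:ℤ)) := by
        apply mul_le_mul hx hy (padicNorm.nonneg _) (by positivity)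
    _ = (p:ℚ)^(-((a+b:ℕ):ℤ)) := by
        rw [← zpow_add₀ (by exact_mod_cast hp.out.ne_zero : (p:ℚ) ≠ 0)]; push_cast; ring_nf

lemma Mp_sum {n : ℕ} {s : Finset ℕ} {f : ℕ → ℚ} (h : ∀ i ∈ s, Mp p n (f i)) :
    Mp p n (∑ i ∈ s, f i) := by
  classical
  induction s using Finset.induction with
  | empty => simpa using Mp_zero n
  | insert _ _ hx ih =>
    rw [Finset.sum_insert hx]
    exact Mp_add (h _ (Finset.mem_insert_self _ _)) (ih fun i hi => h i (Finset.mem_insert_of_mem hi))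

lemma Mp_of_norm_le_one {x : ℚ} (h : padicNorm p x ≤ 1) : Mp p 0 x := by
  unfold Mp; simpa using h

lemma Mp_div_unit {n : ℕ} {x y : ℚ} (hy : padicNorm p y = 1) (hx : Mp p n x) : Mp p n (x / y) := by
  unfold Mp at *
  rw [padicNorm.div, hy, div_one]
  exact hx

lemma Mp_unit_mul {n : ℕ} {x y : ℚ} (hy : padicNorm p y = 1) (hx : Mp p n x) : Mp p n (y * x) := by
  unfold Mp at *
  rw [padicNorm.mul, hy, one_mul]
  exact hx

lemma Mp_of_unit_mul {n : ℕ} {x y : ℚ} (hy : padicNorm p y = 1) (hx : Mp p n (y * x)) :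
    Mp p n x := by
  unfold Mp at *
  rwa [padicNorm.mul, hy, one_mul] at hx

lemma Mp_p_self : Mp p 1 (p:ℚ) := by
  unfold Mp
  rw [padicNorm.padicNorm_p_of_prime]
  simp [zpow_neg]

lemma Mp_p_pow (n : ℕ) : Mp p n ((p:ℚ)^n) := by
  induction n with
  | zero => exact Mp_of_norm_le_one (by simp [padicNorm.one])
  | succ k ih =>
    have := Mp_mul ih Mp_p_self
    rw [← pow_succ] at this
    simpa using this

lemma Mp_of_p_mul {n : ℕ} {x : ℚ} (hx : Mp p (n+1) ((p:ℚ) * x)) : Mp p n x := by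
  unfold Mp at *
  rw [padicNorm.mul, padicNorm.padicNorm_p_of_prime] at hx
  have hp0 : (0:ℚ) < (p:ℚ) := by exact_mod_cast hp.out.pos
  rw [inv_mul_le_iff₀ hp0] at hx
  have key : (p:ℚ) * (p:ℚ)^(-((n+1:ℕ):ℤ)) = (p:ℚ)^(-(n:ℤ)) := by
    have hc : ((n+1:ℕ):ℤ) = (n:ℤ)+1 := by push_cast; ring
    rw [hc, zpow_neg, zpow_neg, zpow_add₀ hp0.ne', zpow_one, zpow_natCast]
    field_simp
  rw [← key]
  exact hx

lemma Icc_eq_Ioc (x : ℕ) : Finset.Icc 1 x = Finset.Ioc 0 x := by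
  ext y; simp only [Finset.mem_Icc, Finset.mem_Ioc]; omega

lemma refl_sum {m : ℕ} (hm : p = 2*m+1) (f : ℕ → ℚ) :
    ∑ k ∈ Finset.Icc 1 (p-1), f k = ∑ k ∈ Finset.Icc 1 m, (f k + f (p - k)) := by
  rw [Finset.sum_add_distrib]
  have h2 : ∑ k ∈ Finset.Ioc m (p-1), f k = ∑ k ∈ Finset.Icc 1 m, f (p - k) := by
    apply Finset.sum_nbij' (i := fun k => p - k) (j := fun k => p - k)
    · intro a ha; simp only [Finset.mem_Ioc] at ha; simp only [Finset.mem_Icc]; omega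
    · intro a ha; simp only [Finset.mem_Icc] at ha; simp only [Finset.mem_Ioc]; omega
    · intro a ha; simp only [Finset.mem_Ioc] at ha; omega
    · intro a ha; simp only [Finset.mem_Icc] at ha; omega
    · intro a ha; simp only [Finset.mem_Ioc] at ha; congr 1; omega
  rw [← h2, Icc_eq_Ioc (p-1), Icc_eq_Ioc m,
    Finset.sum_Ioc_consecutive f (Nat.zero_le m) (by omega : m ≤ p-1)]

lemma refl_prod {m : ℕ} (hm : p = 2*m+1) (f : ℕ → ℚ) :
    ∏ k ∈ Finset.Icc 1 (p-1), f k = ∏ k ∈ Finset.Icc 1 m, (f k * f (p - k)) := by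
  rw [Finset.prod_mul_distrib]
  have h2 : ∏ k ∈ Finset.Ioc m (p-1), f k = ∏ k ∈ Finset.Icc 1 m, f (p - k) := by
    apply Finset.prod_nbij' (i := fun k => p - k) (j := fun k => p - k)
    · intro a ha; simp only [Finset.mem_Ioc] at ha; simp only [Finset.mem_Icc]; omega
    · intro a ha; simp only [Finset.mem_Icc] at ha; simp only [Finset.mem_Ioc]; omega
    · intro a ha; simp only [Finset.mem_Ioc] at ha; omega
    · intro a ha; simp only [Finset.mem_Icc] at ha; omega
    · intro a ha; simp only [Finset.mem_Ioc] at ha; congr 1; omega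
  rw [← h2, Icc_eq_Ioc (p-1), Icc_eq_Ioc m,
    Finset.prod_Ioc_consecutive f (Nat.zero_le m) (by omega : m ≤ p-1)]

lemma choose_prod (p n : ℕ) : (((p+n).choose n : ℕ) : ℚ) = ∏ k ∈ Finset.Icc 1 n, (((p:ℚ)+k)/k) := by
  induction n with
  | zero => simp
  | succ d ih =>
    rw [show p + (d+1) = p + d + 1 by omega, Finset.prod_Icc_succ_top (by omega : 1 ≤ d+1), ← ih]
    have h := Nat.add_one_mul_choose_eq (p+d) d
    have hq : ((p:ℚ)+d+1) * (((p+d).choose d : ℕ):ℚ) = (((p+d+1).choose (d+1) : ℕ):ℚ) * ((d:ℚ)+1) := by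
      exact_mod_cast h
    have hd : ((d:ℚ)+1) ≠ 0 := by positivity
    push_cast
    rw [mul_div_assoc', eq_comm, div_eq_iff hd]
    linear_combination hq

lemma sum_inv_pow6 (h7 : ¬ (p-1) ∣ 6) :
    Mp p 1 (∑ k ∈ Finset.Icc 1 (p-1), (1:ℚ)/(k:ℚ)^6) := by
  classical
  have hp1 : 1 < p := hp.out.one_lt
  set F : ℕ := (p-1).factorial with hF
  set N : ℕ := ∑ k ∈ Finset.Icc 1 (p-1), (F/k)^6 with hN
  -- the rational identity
  have hdvd : ∀ k ∈ Finset.Icc 1 (p-1), k ∣ F := by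
    intro k hk
    simp only [Finset.mem_Icc] at hk
    exact Nat.dvd_factorial (by omega) hk.2
  have hPD : (∑ k ∈ Finset.Icc 1 (p-1), (1:ℚ)/(k:ℚ)^6) = (N:ℚ) / (F:ℚ)^6 := by
    rw [hN]
    push_cast
    rw [Finset.sum_div]
    apply Finset.sum_congr rfl
    intro k hk
    simp only [Finset.mem_Icc] at hk
    have hcast : ((F/k : ℕ):ℚ) = (F:ℚ)/(k:ℚ) :=
      Nat.cast_div (hdvd k (by simp only [Finset.mem_Icc]; omega)) (by exact_mod_cast (by omega : k ≠ 0))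
    rw [hcast]
    have hk0 : (k:ℚ) ≠ 0 := by exact_mod_cast (by omega : k ≠ 0)
    have hF0 : (F:ℚ) ≠ 0 := by exact_mod_cast (Nat.factorial_pos (p-1)).ne'
    field_simp
  -- p divides N
  have hpN : p ∣ N := by
    rw [← ZMod.natCast_eq_zero_iff]
    rw [hN]
    push_cast
    have hterm : ∀ k ∈ Finset.Icc 1 (p-1),
        ((F/k : ℕ) : ZMod p)^6 = (F : ZMod p)^6 * ((k : ZMod p)⁻¹)^6 := by
      intro k hk
      simp only [Finset.mem_Icc] at hk
      have hkz : (k : ZMod p) ≠ 0 := by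
        rw [Ne, ZMod.natCast_eq_zero_iff]
        intro hd
        exact absurd (Nat.le_of_dvd (by omega) hd) (by omega)
      have hmul : ((F/k : ℕ) : ZMod p) * (k : ZMod p) = (F : ZMod p) := by
        rw [← Nat.cast_mul, Nat.div_mul_cancel (hdvd k (by simp only [Finset.mem_Icc]; omega))]
      have : ((F/k : ℕ) : ZMod p) = (F : ZMod p) * (k : ZMod p)⁻¹ := by
        rw [← hmul, mul_assoc, mul_inv_cancel₀ hkz, mul_one]
      rw [this, mul_pow]
    rw [Finset.sum_congr rfl hterm, ← Finset.mul_sum]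
    have hS : ∑ k ∈ Finset.Icc 1 (p-1), ((k : ZMod p)⁻¹)^6 = 0 := by
      have hbij : ∑ k ∈ Finset.Icc 1 (p-1), ((k : ZMod p)⁻¹)^6
          = ∑ u : (ZMod p)ˣ, (((u : ZMod p))⁻¹)^6 := by
        apply Finset.sum_bij (i := fun k hk => ZMod.unitOfCoprime k (by
          simp only [Finset.mem_Icc] at hk
          exact Nat.Coprime.symm ((Nat.Prime.coprime_iff_not_dvd hp.out).mpr
            (fun hd => absurd (Nat.le_of_dvd (by omega) hd) (by omega)))))
        · intro a ha; exact Finset.mem_univ _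
        · intro a ha b hb hab
          simp only [Finset.mem_Icc] at ha hb
          have := congrArg (fun u : (ZMod p)ˣ => (u : ZMod p)) hab
          simp only [ZMod.coe_unitOfCoprime] at this
          have h1 : (a : ZMod p).val = (b : ZMod p).val := by rw [this]
          rwa [ZMod.val_cast_of_lt (by omega), ZMod.val_cast_of_lt (by omega)] at h1
        · intro b _
          refine ⟨(b : ZMod p).val, ?_, ?_⟩
          · simp only [Finset.mem_Icc]
            have hlt : (b : ZMod p).val < p := ZMod.val_lt _
            have hne : (b : ZMod p).val ≠ 0 := by
              rw [Ne, ZMod.val_eq_zero]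
              exact Units.ne_zero b
            omega
          · apply Units.ext
            simp only [ZMod.coe_unitOfCoprime]
            exact ZMod.natCast_rightInverse (b : ZMod p)
        · intro a ha
          simp only [ZMod.coe_unitOfCoprime]
      rw [hbij]
      have hinv : ∑ u : (ZMod p)ˣ, (((u : ZMod p))⁻¹)^6
          = ∑ u : (ZMod p)ˣ, ((u : ZMod p))^6 := by
        rw [← Equiv.sum_comp (Equiv.inv (ZMod p)ˣ) (fun u => ((u : ZMod p))^6)]
        apply Finset.sum_congr rfl
        intro u _
        rw [Equiv.inv_apply, ZMod.inv_coe_unit]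
      rw [hinv]
      have := FiniteField.sum_pow_units (ZMod p) 6
      rw [ZMod.card p] at this
      rw [this, if_neg h7]
    rw [hS, mul_zero]
  -- conclude
  have hFnorm : padicNorm p ((F:ℚ)^6) = 1 := by
    have h1 : padicNorm p (F:ℚ) = 1 := by
      rw [padicNorm.nat_eq_one_iff]
      rw [hp.out.dvd_factorial]
      omega
    rw [IsAbsoluteValue.abv_pow (padicNorm p), h1, one_pow]
  unfold Mp
  rw [hPD, padicNorm.div, hFnorm, div_one]
  have hd : ((p^1 : ℕ) : ℤ) ∣ (N : ℤ) := by
    push_cast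
    simpa using Int.natCast_dvd_natCast.mpr hpN
  have hle := (padicNorm.dvd_iff_norm_le (p := p) (n := 1) (z := (N:ℤ))).mp hd
  simpa using hle


lemma Mp_nat (k : ℕ) : Mp p 0 ((k:ℕ):ℚ) := Mp_of_norm_le_one (padicNorm.of_nat k)

lemma Mp_one : Mp p 0 (1:ℚ) := by
  have := Mp_nat (p := p) 1
  simpa using this

lemma prod_expansion (x : ℕ → ℚ) (s : Finset ℕ) (h6 : padicNorm p 6 = 1)
    (hx : ∀ k ∈ s, Mp p 2 (x k)) :
    Mp p 7 (∏ k ∈ s, (1 + x k) -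
      (1 + (∑ k ∈ s, x k) + ((∑ k ∈ s, x k)^2 - ∑ k ∈ s, (x k)^2)/2 +
       ((∑ k ∈ s, x k)^3 - 3*(∑ k ∈ s, x k)*(∑ k ∈ s, (x k)^2) + 2*(∑ k ∈ s, (x k)^3))/6)) := by
  classical
  induction s using Finset.induction with
  | empty =>
    have : (∏ k ∈ (∅:Finset ℕ), (1 + x k) -
      (1 + (∑ k ∈ (∅:Finset ℕ), x k) + ((∑ k ∈ (∅:Finset ℕ), x k)^2 - ∑ k ∈ (∅:Finset ℕ), (x k)^2)/2 +
       ((∑ k ∈ (∅:Finset ℕ), x k)^3 - 3*(∑ k ∈ (∅:Finset ℕ), x k)*(∑ k ∈ (∅:Finset ℕ), (x k)^2) + 2*(∑ k ∈ (∅:Finset ℕ), (x k)^3))/6)) = 0 := by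
      simp
    rw [this]
    exact Mp_zero 7
  | @insert a s ha ih =>
    have hxa : Mp p 2 (x a) := hx a (Finset.mem_insert_self _ _)
    have hxs : ∀ k ∈ s, Mp p 2 (x k) := fun k hk => hx k (Finset.mem_insert_of_mem hk)
    have ihs := ih hxs
    rw [Finset.prod_insert ha, Finset.sum_insert ha, Finset.sum_insert ha, Finset.sum_insert ha]
    set A := ∑ k ∈ s, x k with hA
    set B := ∑ k ∈ s, (x k)^2 with hB
    set C := ∑ k ∈ s, (x k)^3 with hC
    set P := ∏ k ∈ s, (1 + x k) with hP
    set t := x a with ht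
    have key : (1 + t) * P -
        (1 + (t + A) + ((t + A)^2 - ((t)^2 + B))/2 +
         ((t + A)^3 - 3*(t + A)*((t)^2 + B) + 2*((t)^3 + C))/6)
        = (1 + t) * (P - (1 + A + (A^2 - B)/2 + (A^3 - 3*A*B + 2*C)/6))
          + t * ((A^3 - 3*A*B + 2*C)/6) := by
      ring
    rw [key]
    -- bounds
    have hA2 : Mp p 2 A := Mp_sum hxs
    have hB4 : Mp p 4 B := Mp_sum (fun k hk => by
      have := Mp_mul (hxs k hk) (hxs k hk)
      rw [← sq] at this
      exact this)
    have hC6 : Mp p 6 C := Mp_sum (fun k hk => by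
      have := Mp_mul (Mp_mul (hxs k hk) (hxs k hk)) (hxs k hk)
      rw [show x k * x k * x k = (x k)^3 by ring] at this
      exact this)
    have hA6 : Mp p 6 (A^3) := by
      have := Mp_mul (Mp_mul hA2 hA2) hA2
      rw [show A * A * A = A^3 by ring] at this
      exact this
    have h3AB : Mp p 6 (3*A*B) := by
      have h3 : Mp p 0 (3:ℚ) := by
        have := Mp_nat (p := p) 3
        simpa using this
      have := Mp_mul (Mp_mul h3 hA2) hB4
      simpa using this
    have h2C : Mp p 6 (2*C) := by
      have h2 : Mp p 0 (2:ℚ) := by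
        have := Mp_nat (p := p) 2
        simpa using this
      have := Mp_mul h2 hC6
      simpa using this
    have he3 : Mp p 6 ((A^3 - 3*A*B + 2*C)/6) :=
      Mp_div_unit h6 (Mp_add (Mp_sub hA6 h3AB) h2C)
    apply Mp_add
    · have h1t : Mp p 0 (1 + t) := Mp_add Mp_one (Mp_mono (by omega) hxa)
      have := Mp_mul h1t ihs
      simpa using this
    · have := Mp_mul hxa he3
      exact Mp_mono (by omega) this

lemma Mp_int (z : ℤ) : Mp p 0 ((z:ℤ):ℚ) := Mp_of_norm_le_one (padicNorm.of_int z)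

lemma norm_nat_unit {k : ℕ} (h1 : 1 ≤ k) (h2 : k < p) : padicNorm p (k:ℚ) = 1 := by
  rw [padicNorm.nat_eq_one_iff]
  intro hdvd
  exact absurd (Nat.le_of_dvd (by omega) hdvd) (by omega)

lemma kfacts {m k : ℕ} (hm : p = 2*m+1) (hk : k ∈ Finset.Icc 1 m) :
    (k:ℚ) ≠ 0 ∧ ((p:ℚ) - (k:ℚ)) ≠ 0 ∧ ((p - k : ℕ):ℚ) = (p:ℚ) - (k:ℚ) ∧
      padicNorm p ((k:ℚ)) = 1 ∧ padicNorm p ((p:ℚ)-(k:ℚ)) = 1 := by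
  simp only [Finset.mem_Icc] at hk
  have hc : ((p - k : ℕ):ℚ) = (p:ℚ) - (k:ℚ) := by
    have : k ≤ p := by omega
    push_cast [Nat.cast_sub this]
    ring
  refine ⟨?_, ?_, hc, ?_, ?_⟩
  · exact_mod_cast (by omega : k ≠ 0)
  · rw [← hc]
    exact_mod_cast (by omega : p - k ≠ 0)
  · exact norm_nat_unit (by omega) (by omega)
  · rw [← hc]
    exact norm_nat_unit (by omega) (by omega)

lemma main_cong (h2 : p ≠ 2) (h3 : p ≠ 3) (h7 : p ≠ 7)
    (hw : Mp p 4 (((((2*p-1).choose (p-1) : ℕ)):ℚ) - 1)) :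
    Mp p 7 (((((2*p-1).choose (p-1):ℕ)):ℚ) -
      (1 - 2*(p:ℚ)*(∑ k ∈ Finset.Icc 1 (p-1), (1:ℚ)/(k:ℚ))
         - 2*(p:ℚ)^2*(∑ k ∈ Finset.Icc 1 (p-1), (1:ℚ)/(k:ℚ)^2))) := by
  classical
  have hp5 : 5 ≤ p := by
    by_contra hlt
    push_neg at hlt
    have h2le := hp.out.two_le
    interval_cases p <;> first
      | exact absurd hp.out (by decide)
      | omega
  obtain ⟨mm, hmm⟩ := (hp.out.odd_of_ne_two h2)
  set m : ℕ := (p-1)/2 with hmdef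
  have hm : p = 2*m+1 := by omega
  have hm1 : 1 ≤ m := by omega
  -- nondivisibility facts
  have hnd6 : ¬ (p-1) ∣ 6 := by
    intro hd
    have hub : p ≤ 7 := by
      have := Nat.le_of_dvd (by norm_num) hd
      omega
    interval_cases p <;> first
      | (revert hd; decide)
      | exact absurd hp.out (by decide)
      | exact h7 rfl
  have hnorm2 : padicNorm p (2:ℚ) = 1 := by
    have : ((2:ℕ):ℚ) = (2:ℚ) := by norm_num
    rw [← this, padicNorm.nat_eq_one_iff]
    intro hd
    have := Nat.le_of_dvd (by norm_num) hd
    omega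
  have hnorm6 : padicNorm p (6:ℚ) = 1 := by
    have : ((6:ℕ):ℚ) = (6:ℚ) := by norm_num
    rw [← this, padicNorm.nat_eq_one_iff]
    intro hd
    have hub : p ≤ 6 := Nat.le_of_dvd (by norm_num) hd
    interval_cases p <;> first
      | (revert hd; decide)
      | exact absurd hp.out (by decide)
  -- definitions
  set P1 : ℚ := ∑ k ∈ Finset.Icc 1 (p-1), (1:ℚ)/(k:ℚ) with hP1def
  set P2 : ℚ := ∑ k ∈ Finset.Icc 1 (p-1), (1:ℚ)/(k:ℚ)^2 with hP2def
  set P6 : ℚ := ∑ k ∈ Finset.Icc 1 (p-1), (1:ℚ)/(k:ℚ)^6 with hP6def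
  set g : ℕ → ℚ := fun k => (1:ℚ)/((k:ℚ)*((p:ℚ)-(k:ℚ))) with hgdef
  set T1 : ℚ := ∑ k ∈ Finset.Icc 1 m, g k with hT1def
  set U2 : ℚ := ∑ k ∈ Finset.Icc 1 m, (g k)^2 with hU2def
  set U3 : ℚ := ∑ k ∈ Finset.Icc 1 m, (g k)^3 with hU3def
  set H6 : ℚ := ∑ k ∈ Finset.Icc 1 m, (1:ℚ)/(k:ℚ)^6 with hH6def
  set R3 : ℚ := ∑ k ∈ Finset.Icc 1 m,
    ((3*(k:ℚ)^2 - 3*(k:ℚ)*(p:ℚ) + (p:ℚ)^2) / ((k:ℚ)^6*((p:ℚ)-(k:ℚ))^3)) with hR3def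
  set R6 : ℚ := ∑ k ∈ Finset.Icc 1 m,
    (((p:ℚ)^5 - 6*(p:ℚ)^4*(k:ℚ) + 15*(p:ℚ)^3*(k:ℚ)^2 - 20*(p:ℚ)^2*(k:ℚ)^3
      + 15*(p:ℚ)*(k:ℚ)^4 - 6*(k:ℚ)^5) / ((k:ℚ)^6*((p:ℚ)-(k:ℚ))^6)) with hR6def
  set x : ℕ → ℚ := fun k => 2*(p:ℚ)^2 * g k with hxdef
  set Cq : ℚ := ((((2*p-1).choose (p-1):ℕ)):ℚ) with hCqdef
  -- identity I1 : p * T1 = P1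
  have hI1 : (p:ℚ) * T1 = P1 := by
    rw [hP1def, refl_sum hm (fun k => (1:ℚ)/(k:ℚ)), hT1def, Finset.mul_sum]
    apply Finset.sum_congr rfl
    intro k hk
    obtain ⟨hk0, hpk0, hc, -, -⟩ := kfacts hm hk
    rw [hc, hgdef]
    field_simp
    try ring
  -- identity I2 : p^2 * U2 = P2 + 2*T1
  have hI2 : (p:ℚ)^2 * U2 = P2 + 2*T1 := by
    have step : (p:ℚ)^2 * U2 = ∑ k ∈ Finset.Icc 1 m,
        (((1:ℚ)/(k:ℚ)^2 + (1:ℚ)/((p - k:ℕ):ℚ)^2) + 2 * g k) := by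
      rw [hU2def, Finset.mul_sum]
      apply Finset.sum_congr rfl
      intro k hk
      obtain ⟨hk0, hpk0, hc, -, -⟩ := kfacts hm hk
      rw [hc, hgdef]
      field_simp
      try ring
    rw [step, hP2def, refl_sum hm (fun k => (1:ℚ)/(k:ℚ)^2)]
    simp only [Finset.sum_add_distrib]
    rw [← Finset.mul_sum, ← hT1def]
  -- identity I3 : U3 = p * R3 - H6
  have hI3 : U3 = (p:ℚ) * R3 - H6 := by
    rw [hU3def, hR3def, hH6def, Finset.mul_sum, ← Finset.sum_sub_distrib]
    apply Finset.sum_congr rfl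
    intro k hk
    obtain ⟨hk0, hpk0, hc, -, -⟩ := kfacts hm hk
    rw [hgdef]
    field_simp
    try ring
  -- identity I4 : 2*H6 = P6 + p * R6
  have hI4 : 2*H6 = P6 + (p:ℚ) * R6 := by
    have step : 2*H6 = ∑ k ∈ Finset.Icc 1 m,
        (((1:ℚ)/(k:ℚ)^6 + (1:ℚ)/((p - k:ℕ):ℚ)^6) +
          (p:ℚ) * (((p:ℚ)^5 - 6*(p:ℚ)^4*(k:ℚ) + 15*(p:ℚ)^3*(k:ℚ)^2 - 20*(p:ℚ)^2*(k:ℚ)^3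
      + 15*(p:ℚ)*(k:ℚ)^4 - 6*(k:ℚ)^5) / ((k:ℚ)^6*((p:ℚ)-(k:ℚ))^6))) := by
      rw [hH6def, Finset.mul_sum]
      apply Finset.sum_congr rfl
      intro k hk
      obtain ⟨hk0, hpk0, hc, -, -⟩ := kfacts hm hk
      rw [hc]
      field_simp
      try ring
    rw [step, hP6def, refl_sum hm (fun k => (1:ℚ)/(k:ℚ)^6)]
    simp only [Finset.sum_add_distrib]
    rw [← Finset.mul_sum, ← hR6def]
  -- pointwise norm facts
  have h2' : Mp p 0 (2:ℚ) := by have := Mp_nat (p:=p) 2; simpa using this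
  have h3' : Mp p 0 (3:ℚ) := by have := Mp_nat (p:=p) 3; simpa using this
  have h4' : Mp p 0 (4:ℚ) := by have := Mp_nat (p:=p) 4; simpa using this
  have h8' : Mp p 0 (8:ℚ) := by have := Mp_nat (p:=p) 8; simpa using this
  have hg0 : ∀ k ∈ Finset.Icc 1 m, Mp p 0 (g k) := by
    intro k hk
    obtain ⟨-, -, -, nk, npk⟩ := kfacts hm hk
    rw [hgdef]
    refine Mp_div_unit ?_ Mp_one
    rw [padicNorm.mul, nk, npk]; norm_num
  have hx2 : ∀ k ∈ Finset.Icc 1 m, Mp p 2 (x k) := by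
    intro k hk
    rw [hxdef]
    have := Mp_mul (Mp_mul h2' (Mp_p_pow 2)) (hg0 k hk)
    simpa using this
  have hT10 : Mp p 0 T1 := by rw [hT1def]; exact Mp_sum hg0
  have hU20 : Mp p 0 U2 := by
    rw [hU2def]
    refine Mp_sum (fun k hk => ?_)
    have := Mp_mul (hg0 k hk) (hg0 k hk)
    rw [← sq] at this; simpa using this
  have hU30 : Mp p 0 U3 := by
    rw [hU3def]
    refine Mp_sum (fun k hk => ?_)
    have := Mp_mul (Mp_mul (hg0 k hk) (hg0 k hk)) (hg0 k hk)
    rw [show g k * g k * g k = (g k)^3 by ring] at this; simpa using this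
  have hR30 : Mp p 0 R3 := by
    rw [hR3def]
    refine Mp_sum (fun k hk => ?_)
    obtain ⟨-, -, -, nk, npk⟩ := kfacts hm hk
    have hnum : Mp p 0 (3*(k:ℚ)^2 - 3*(k:ℚ)*(p:ℚ) + (p:ℚ)^2) := by
      have hcast : (3*(k:ℚ)^2 - 3*(k:ℚ)*(p:ℚ) + (p:ℚ)^2)
          = (((3*(k:ℤ)^2 - 3*(k:ℤ)*(p:ℤ) + (p:ℤ)^2 : ℤ)):ℚ) := by push_cast; ring
      rw [hcast]; exact Mp_int _
    refine Mp_div_unit ?_ hnum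
    rw [padicNorm.mul, IsAbsoluteValue.abv_pow (padicNorm p),
      IsAbsoluteValue.abv_pow (padicNorm p), nk, npk]
    norm_num
  have hR60 : Mp p 0 R6 := by
    rw [hR6def]
    refine Mp_sum (fun k hk => ?_)
    obtain ⟨-, -, -, nk, npk⟩ := kfacts hm hk
    have hnum : Mp p 0 ((p:ℚ)^5 - 6*(p:ℚ)^4*(k:ℚ) + 15*(p:ℚ)^3*(k:ℚ)^2 - 20*(p:ℚ)^2*(k:ℚ)^3
        + 15*(p:ℚ)*(k:ℚ)^4 - 6*(k:ℚ)^5) := by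
      have hcast : ((p:ℚ)^5 - 6*(p:ℚ)^4*(k:ℚ) + 15*(p:ℚ)^3*(k:ℚ)^2 - 20*(p:ℚ)^2*(k:ℚ)^3
          + 15*(p:ℚ)*(k:ℚ)^4 - 6*(k:ℚ)^5)
          = ((((p:ℤ)^5 - 6*(p:ℤ)^4*(k:ℤ) + 15*(p:ℤ)^3*(k:ℤ)^2 - 20*(p:ℤ)^2*(k:ℤ)^3
          + 15*(p:ℤ)*(k:ℤ)^4 - 6*(k:ℤ)^5 : ℤ)):ℚ) := by push_cast; ring
      rw [hcast]; exact Mp_int _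
    refine Mp_div_unit ?_ hnum
    rw [padicNorm.mul, IsAbsoluteValue.abv_pow (padicNorm p),
      IsAbsoluteValue.abv_pow (padicNorm p), nk, npk]
    norm_num
  have hP61 : Mp p 1 P6 := by rw [hP6def]; exact sum_inv_pow6 hnd6
  have hH61 : Mp p 1 H6 := by
    apply Mp_of_unit_mul hnorm2
    rw [hI4]
    exact Mp_add hP61 (Mp_mono (by omega) (Mp_mul Mp_p_self hR60))
  have hU31 : Mp p 1 U3 := by
    rw [hI3]
    exact Mp_sub (Mp_mono (by omega) (Mp_mul Mp_p_self hR30)) hH61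
  -- expansion setup
  set E1 : ℚ := ∑ k ∈ Finset.Icc 1 m, x k with hE1def
  set SB : ℚ := ∑ k ∈ Finset.Icc 1 m, (x k)^2 with hSBdef
  set SC : ℚ := ∑ k ∈ Finset.Icc 1 m, (x k)^3 with hSCdef
  set e3 : ℚ := (E1^3 - 3*E1*SB + 2*SC)/6 with he3def
  -- product identity
  have hCp : Cq = ∏ k ∈ Finset.Icc 1 (p-1), (((p:ℚ)+(k:ℚ))/(k:ℚ)) := by
    rw [hCqdef, show 2*p-1 = p + (p-1) by omega, choose_prod p (p-1)]
  have hCprod : Cq = ∏ k ∈ Finset.Icc 1 m, (1 + x k) := by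
    rw [hCp, refl_prod hm (fun k => ((p:ℚ)+(k:ℚ))/(k:ℚ))]
    apply Finset.prod_congr rfl
    intro k hk
    obtain ⟨hk0, hpk0, hc, -, -⟩ := kfacts hm hk
    rw [hc, hxdef, hgdef]
    field_simp
    try ring
  have hQ7' : Mp p 7 (Cq - (1 + E1 + (E1^2 - SB)/2 + e3)) := by
    rw [hCprod]
    exact prod_expansion x (Finset.Icc 1 m) hnorm6 hx2
  -- sum value identities
  have hE1T : E1 = 2*(p:ℚ)^2*T1 := by
    rw [hE1def, hT1def, Finset.mul_sum]
  have hE1P : E1 = 2*(p:ℚ)*P1 := by rw [hE1T, ← hI1]; ring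
  have hSBU : SB = 4*(p:ℚ)^4*U2 := by
    rw [hSBdef, hU2def, Finset.mul_sum]
    refine Finset.sum_congr rfl (fun k hk => ?_)
    rw [hxdef]; ring
  have hSCU : SC = 8*(p:ℚ)^6*U3 := by
    rw [hSCdef, hU3def, Finset.mul_sum]
    refine Finset.sum_congr rfl (fun k hk => ?_)
    rw [hxdef]; ring
  have hSBval : SB = 4*(p:ℚ)^2*P2 + 8*(p:ℚ)*P1 := by
    linear_combination hSBU + 4*(p:ℚ)^2*hI2 + 8*(p:ℚ)*hI1
  -- norm bounds for expansion pieces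
  have hE12 : Mp p 2 E1 := by rw [hE1def]; exact Mp_sum hx2
  have hSB4 : Mp p 4 SB := by
    rw [hSBU]
    have := Mp_mul (Mp_mul h4' (Mp_p_pow 4)) hU20
    simpa using this
  have hSC7 : Mp p 7 SC := by
    rw [hSCU]
    have := Mp_mul (Mp_mul h8' (Mp_p_pow 6)) hU31
    simpa using this
  have hP10 : Mp p 0 P1 := by
    rw [hP1def]
    refine Mp_sum (fun k hk => ?_)
    simp only [Finset.mem_Icc] at hk
    exact Mp_div_unit (norm_nat_unit (by omega) (by omega)) Mp_one
  have he3_6 : Mp p 6 e3 := by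
    rw [he3def]
    refine Mp_div_unit hnorm6 (Mp_add (Mp_sub ?_ ?_) ?_)
    · have := Mp_mul (Mp_mul hE12 hE12) hE12
      rw [show E1*E1*E1 = E1^3 by ring] at this
      exact Mp_mono (by omega) this
    · have := Mp_mul (Mp_mul h3' hE12) hSB4
      exact Mp_mono (by omega) this
    · have := Mp_mul h2' hSC7
      exact Mp_mono (by omega) this
  have hU2bd : Mp p 4 (2*(p:ℚ)^4*U2) := by
    have := Mp_mul (Mp_mul h2' (Mp_p_pow 4)) hU20
    simpa using this
  -- bootstrap identity
  have heq : 2*(p:ℚ)*P1 = (Cq - 1) - (Cq - (1 + E1 + (E1^2 - SB)/2 + e3))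
      - 2*(p:ℚ)^2*P1^2 + 2*(p:ℚ)^4*U2 - e3 := by
    linear_combination (-1 - (E1 + 2*(p:ℚ)*P1)/2) * hE1P + (1/2) * hSBU
  have hpeel : ∀ n : ℕ, Mp p (n+1) (2*(p:ℚ)*P1) → Mp p n P1 := by
    intro n h
    rw [show 2*(p:ℚ)*P1 = 2*((p:ℚ)*P1) by ring] at h
    exact Mp_of_p_mul (Mp_of_unit_mul hnorm2 h)
  have hstep : ∀ t : ℕ, Mp p t P1 → Mp p (min 4 (2+2*t)) (2*(p:ℚ)*P1) := by
    intro t ht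
    rw [heq]
    refine Mp_sub (Mp_add (Mp_sub (Mp_sub ?_ ?_) ?_) ?_) ?_
    · exact Mp_mono (by omega) hw
    · exact Mp_mono (by omega) hQ7'
    · have := Mp_mul (Mp_mul (Mp_mul h2' (Mp_p_pow 2)) ht) ht
      rw [show 2*(p:ℚ)^2*P1*P1 = 2*(p:ℚ)^2*P1^2 by ring] at this
      exact Mp_mono (by omega) this
    · exact Mp_mono (by omega) hU2bd
    · exact Mp_mono (by omega) he3_6
  have hP11 : Mp p 1 P1 := by
    refine hpeel 1 (Mp_mono ?_ (hstep 0 hP10))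
    norm_num
  have hP13 : Mp p 3 P1 := by
    refine hpeel 3 (Mp_mono ?_ (hstep 1 hP11))
    norm_num
  -- final bounds
  have hE14 : Mp p 4 E1 := by
    rw [hE1P]
    have := Mp_mul h2' (Mp_mul Mp_p_self hP13)
    rw [show (2:ℚ)*((p:ℚ)*P1) = 2*(p:ℚ)*P1 by ring] at this
    exact Mp_mono (by omega) this
  have he37 : Mp p 7 e3 := by
    rw [he3def]
    refine Mp_div_unit hnorm6 (Mp_add (Mp_sub ?_ ?_) ?_)
    · have := Mp_mul (Mp_mul hE14 hE14) hE14
      rw [show E1*E1*E1 = E1^3 by ring] at this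
      exact Mp_mono (by omega) this
    · have := Mp_mul (Mp_mul h3' hE14) hSB4
      exact Mp_mono (by omega) this
    · have := Mp_mul h2' hSC7
      exact Mp_mono (by omega) this
  have hP1sq : Mp p 7 (2*(p:ℚ)^2*P1^2) := by
    have := Mp_mul (Mp_mul (Mp_mul h2' (Mp_p_pow 2)) hP13) hP13
    rw [show 2*(p:ℚ)^2*P1*P1 = 2*(p:ℚ)^2*P1^2 by ring] at this
    exact Mp_mono (by omega) this
  have hfinal : Cq - (1 - 2*(p:ℚ)*P1 - 2*(p:ℚ)^2*P2)
      = (Cq - (1 + E1 + (E1^2 - SB)/2 + e3)) + e3 + 2*(p:ℚ)^2*P1^2 := by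
    linear_combination (1 + (E1 + 2*(p:ℚ)*P1)/2) * hE1P - (1/2) * hSBval
  rw [hfinal]
  exact Mp_add (Mp_add hQ7' he37) hP1sq

end

/-- `a ≡ b (mod p^n)` in the `p`-adic sense for rationals. -/
def PadicCong (p : ℕ) (n : ℕ) (a b : ℚ) : Prop :=
  padicNorm p (a - b) ≤ (p : ℚ) ^ (-(n : ℤ))

theorem stmt11 (p : ℕ) (hp : p.Prime)
    (hw : PadicCong p 4 ((Nat.choose (2 * p - 1) (p - 1)) : ℚ) 1) :
    PadicCong p 7 ((Nat.choose (2 * p - 1) (p - 1)) : ℚ)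
      (1 - 2 * (p : ℚ) * (∑ k ∈ Finset.Icc 1 (p - 1), (1 : ℚ) / (k : ℚ)) - 2 * (p : ℚ) ^ 2 * (∑ k ∈ Finset.Icc 1 (p - 1), (1 : ℚ) / (k : ℚ) ^ 2)) := by
  haveI : Fact p.Prime := ⟨hp⟩
  unfold PadicCong at hw ⊢
  have h2 : p ≠ 2 := by
    rintro rfl
    have hc : ((Nat.choose (2*2-1) (2-1) : ℕ):ℚ) - 1 = ((2:ℤ):ℚ) := by
      norm_num [show Nat.choose 3 1 = 3 from by decide]
    rw [hc] at hw
    have hdvd := padicNorm.dvd_iff_norm_le.mpr hw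
    norm_num at hdvd
  have h3 : p ≠ 3 := by
    rintro rfl
    have hc : ((Nat.choose (2*3-1) (3-1) : ℕ):ℚ) - 1 = ((9:ℤ):ℚ) := by
      norm_num [show Nat.choose 5 2 = 10 from by decide]
    rw [hc] at hw
    have hdvd := padicNorm.dvd_iff_norm_le.mpr hw
    norm_num at hdvd
  have h7 : p ≠ 7 := by
    rintro rfl
    have hc : ((Nat.choose (2*7-1) (7-1) : ℕ):ℚ) - 1 = ((1715:ℤ):ℚ) := by
      norm_num [show Nat.choose 13 6 = 1716 from by decide]
    rw [hc] at hw
    have hdvd := padicNorm.dvd_iff_norm_le.mpr hw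
    norm_num at hdvd
  exact main_cong h2 h3 h7 hw
end

section
/- For any prime p ≥ 11, p·R_6(p) ≡ -(2/5)·R_5(p) (mod p⁴), where R_n(p) = ∑_{k=1}^{p-1} 1/k^n. -/
open Finset


section helpers
variable {p : ℕ}

lemma unit_cast (hp : p.Prime) {k : ℕ} (hk1 : 1 ≤ k) (hk2 : k ≤ p - 1) (a : ℕ) :
    IsUnit ((k : ZMod (p ^ a))) := by
  rw [ZMod.isUnit_iff_coprime]
  apply Nat.Coprime.pow_right
  rw [Nat.coprime_comm]
  refine (hp.coprime_iff_not_dvd).mpr fun h => ?_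
  have h2 := hp.two_le
  have := Nat.le_of_dvd (by omega) h
  omega

lemma inv_eq' {n : ℕ} {a x : ZMod n} (h : x * a = 1) : a⁻¹ = x := by
  have ha : IsUnit a := IsUnit.of_mul_eq_one (a := a) x (by rwa [mul_comm])
  calc a⁻¹ = x * a * a⁻¹ := by rw [h, one_mul]
  _ = x := by rw [mul_assoc, ZMod.mul_inv_of_unit a ha, mul_one]

lemma map_inv' {n m : ℕ} (f : ZMod n →+* ZMod m) {k : ℕ} (hk : IsUnit (k : ZMod n)) :
    f ((k : ZMod n)⁻¹) = ((k : ZMod m))⁻¹ := by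
  symm
  apply inv_eq'
  rw [← map_natCast f k, ← map_mul, ZMod.inv_mul_of_unit _ hk, map_one]

lemma kill {n m c : ℕ} [NeZero n] (hm : m ∣ n) (hc : m * c = n) (x : ZMod n)
    (h : ZMod.castHom hm (ZMod m) x = 0) : (c : ZMod n) * x = 0 := by
  obtain ⟨y, rfl⟩ := ZMod.natCast_rightInverse.surjective x
  rw [map_natCast, ZMod.natCast_eq_zero_iff] at h
  obtain ⟨d, rfl⟩ := h
  have hh : c * (m * d) = n * d := by rw [← hc]; ring
  rw [← Nat.cast_mul, hh, Nat.cast_mul, ZMod.natCast_self, zero_mul]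

lemma sum_reflect {M : Type*} [AddCommMonoid M] (hp : 2 ≤ p) (f : ℕ → M) :
    ∑ k ∈ Icc 1 (p - 1), f (p - k) = ∑ k ∈ Icc 1 (p - 1), f k := by
  refine Finset.sum_nbij' (f := fun k => f (p - k)) (g := f) (fun k => p - k) (fun k => p - k)
    ?_ ?_ ?_ ?_ ?_ <;> simp only [Finset.mem_Icc] <;> intros <;> first | omega | rfl | trivial

lemma sum_icc_eq_zmod {M : Type*} [AddCommMonoid M] [NeZero p] (f : ZMod p → M) :
    ∑ k ∈ Icc 1 (p - 1), f ((k : ZMod p)) = ∑ x ∈ Finset.univ.erase (0 : ZMod p), f x := by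
  have hp1 : 1 ≤ p := Nat.one_le_iff_ne_zero.mpr (NeZero.ne p)
  refine Finset.sum_nbij' (f := fun (k : ℕ) => f ((k : ZMod p))) (g := f)
    (fun (k : ℕ) => ((k : ZMod p))) (fun x => x.val) ?_ ?_ ?_ ?_ ?_
  · intro a ha
    rw [Finset.mem_Icc] at ha
    rw [Finset.mem_erase]
    refine ⟨fun h => ?_, Finset.mem_univ _⟩
    rw [ZMod.natCast_eq_zero_iff] at h
    have := Nat.le_of_dvd (by omega) h
    omega
  · intro x hx
    rw [Finset.mem_erase] at hx
    rw [Finset.mem_Icc]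
    have h1 : x.val ≠ 0 := fun h => hx.1 (by rwa [ZMod.val_eq_zero] at h)
    have h2 := ZMod.val_lt x
    show 1 ≤ x.val ∧ x.val ≤ p - 1
    omega
  · intro a ha
    rw [Finset.mem_Icc] at ha
    exact ZMod.val_cast_of_lt (by omega)
  · intro x _
    exact ZMod.natCast_zmod_val x
  · intros; rfl

lemma sum8 (hp : p.Prime) (h11 : 11 ≤ p) :
    ∑ k ∈ Icc 1 (p - 1), (((k : ZMod p))⁻¹) ^ 8 = 0 := by
  haveI : Fact p.Prime := ⟨hp⟩
  rw [sum_icc_eq_zmod (f := fun x => (x⁻¹) ^ 8)]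
  have step : ∑ x ∈ Finset.univ.erase (0 : ZMod p), (x⁻¹) ^ 8
      = ∑ x ∈ Finset.univ.erase (0 : ZMod p), x ^ 8 := by
    refine Finset.sum_nbij' (f := fun x => (x⁻¹) ^ 8) (g := fun x => x ^ 8)
      (fun x => x⁻¹) (fun x => x⁻¹) ?_ ?_ ?_ ?_ ?_
    · intro a ha
      rw [Finset.mem_erase] at ha ⊢
      exact ⟨inv_ne_zero ha.1, Finset.mem_univ _⟩
    · intro a ha
      rw [Finset.mem_erase] at ha ⊢
      exact ⟨inv_ne_zero ha.1, Finset.mem_univ _⟩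
    · intros; exact inv_inv _
    · intros; exact inv_inv _
    · intros; rfl
  rw [step]
  have h0 : ∑ x ∈ (Finset.univ : Finset (ZMod p)), x ^ 8 = 0 :=
    FiniteField.sum_pow_lt_card_sub_one (ZMod p) 8 (by rw [ZMod.card]; omega)
  rw [show (Finset.univ : Finset (ZMod p)) = insert 0 (Finset.univ.erase 0) from
    (Finset.insert_erase (Finset.mem_univ 0)).symm, Finset.sum_insert (Finset.notMem_erase _ _),
    zero_pow (by norm_num)] at h0
  simpa using h0

end helpers

section core
variable {p : ℕ}

lemma perk_A (hp : p.Prime) {k : ℕ} (hk1 : 1 ≤ k) (hk2 : k ≤ p - 1) :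
    (((k : ZMod (p^2)))⁻¹)^2 * ((((p - k : ℕ) : ZMod (p^2)))⁻¹)^5
      = (-1) * (((k : ZMod (p^2)))⁻¹)^7 + (-5 * (p : ZMod (p^2))) * (((k : ZMod (p^2)))⁻¹)^8 := by
  have h2p := hp.two_le
  set u := ((k : ZMod (p^2)))⁻¹ with hudef
  set v := (((p - k : ℕ) : ZMod (p^2)))⁻¹ with hvdef
  have hps : (((p - k : ℕ)) : ZMod (p^2)) = (p : ZMod (p^2)) - k := by
    rw [Nat.cast_sub (by omega)]
  have hu : (k : ZMod (p^2)) * u = 1 := ZMod.mul_inv_of_unit _ (unit_cast hp hk1 hk2 2)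
  have hunit2 : IsUnit (((p - k : ℕ) : ZMod (p^2))) := unit_cast hp (by omega) (by omega) 2
  have hv : ((p : ZMod (p^2)) - k) * v = 1 := by
    rw [← hps]; exact ZMod.mul_inv_of_unit _ hunit2
  have hπ : ((p : ZMod (p^2)))^2 = 0 := by rw [← Nat.cast_pow, ZMod.natCast_self]
  have hC : IsUnit ((k : ZMod (p^2))^8 * ((p : ZMod (p^2)) - k)^5) := by
    rw [← hps]; exact ((unit_cast hp hk1 hk2 2).pow 8).mul (hunit2.pow 5)
  apply hC.mul_right_cancel
  have h2 : (k : ZMod (p^2))^2 * u^2 = 1 := by rw [← mul_pow, hu, one_pow]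
  have h7 : (k : ZMod (p^2))^7 * u^7 = 1 := by rw [← mul_pow, hu, one_pow]
  have h8 : (k : ZMod (p^2))^8 * u^8 = 1 := by rw [← mul_pow, hu, one_pow]
  have hv5 : ((p : ZMod (p^2)) - k)^5 * v^5 = 1 := by rw [← mul_pow, hv, one_pow]
  have h25 : ((k : ZMod (p^2))^2 * u^2) * (((p : ZMod (p^2)) - k)^5 * v^5) = 1 := by
    rw [h2, hv5, mul_one]
  linear_combination (k : ZMod (p^2))^6 * h25 + ((k : ZMod (p^2)) * ((p : ZMod (p^2)) - k)^5) * h7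
    + (5 * (p : ZMod (p^2)) * ((p : ZMod (p^2)) - k)^5) * h8
    + (15*(k : ZMod (p^2))^4 - 40*(p : ZMod (p^2))*(k : ZMod (p^2))^3
      + 45*(p : ZMod (p^2))^2*(k : ZMod (p^2))^2 - 24*(p : ZMod (p^2))^3*(k : ZMod (p^2))
      + 5*(p : ZMod (p^2))^4) * hπ

lemma perk_B (hp : p.Prime) {k : ℕ} (hk1 : 1 ≤ k) (hk2 : k ≤ p - 1) :
    (((k : ZMod (p^2)))⁻¹)^7 + ((((p - k : ℕ) : ZMod (p^2)))⁻¹)^7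
      = (-7 * (p : ZMod (p^2))) * (((k : ZMod (p^2)))⁻¹)^8 := by
  have h2p := hp.two_le
  set u := ((k : ZMod (p^2)))⁻¹ with hudef
  set v := (((p - k : ℕ) : ZMod (p^2)))⁻¹ with hvdef
  have hps : (((p - k : ℕ)) : ZMod (p^2)) = (p : ZMod (p^2)) - k := by
    rw [Nat.cast_sub (by omega)]
  have hu : (k : ZMod (p^2)) * u = 1 := ZMod.mul_inv_of_unit _ (unit_cast hp hk1 hk2 2)
  have hunit2 : IsUnit (((p - k : ℕ) : ZMod (p^2))) := unit_cast hp (by omega) (by omega) 2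
  have hv : ((p : ZMod (p^2)) - k) * v = 1 := by
    rw [← hps]; exact ZMod.mul_inv_of_unit _ hunit2
  have hπ : ((p : ZMod (p^2)))^2 = 0 := by rw [← Nat.cast_pow, ZMod.natCast_self]
  have hC : IsUnit ((k : ZMod (p^2))^8 * ((p : ZMod (p^2)) - k)^7) := by
    rw [← hps]; exact ((unit_cast hp hk1 hk2 2).pow 8).mul (hunit2.pow 7)
  apply hC.mul_right_cancel
  have h7 : (k : ZMod (p^2))^7 * u^7 = 1 := by rw [← mul_pow, hu, one_pow]
  have h8 : (k : ZMod (p^2))^8 * u^8 = 1 := by rw [← mul_pow, hu, one_pow]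
  have hv7 : ((p : ZMod (p^2)) - k)^7 * v^7 = 1 := by rw [← mul_pow, hv, one_pow]
  linear_combination ((k : ZMod (p^2)) * ((p : ZMod (p^2)) - k)^7) * h7
    + (k : ZMod (p^2))^8 * hv7 + (7 * (p : ZMod (p^2)) * ((p : ZMod (p^2)) - k)^7) * h8
    + (28*(k : ZMod (p^2))^6 - 112*(p : ZMod (p^2))*(k : ZMod (p^2))^5
      + 210*(p : ZMod (p^2))^2*(k : ZMod (p^2))^4 - 224*(p : ZMod (p^2))^3*(k : ZMod (p^2))^3
      + 140*(p : ZMod (p^2))^4*(k : ZMod (p^2))^2 - 48*(p : ZMod (p^2))^5*(k : ZMod (p^2))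
      + 7*(p : ZMod (p^2))^6) * hπ

lemma perk_main (hp : p.Prime) {k : ℕ} (hk1 : 1 ≤ k) (hk2 : k ≤ p - 1) :
    10 * (p : ZMod (p^4)) * (((k : ZMod (p^4)))⁻¹)^6 + 2 * (((k : ZMod (p^4)))⁻¹)^5
      + 2 * ((((p - k : ℕ) : ZMod (p^4)))⁻¹)^5
      = (30 * (p : ZMod (p^4))^2) * ((((k : ZMod (p^4)))⁻¹)^2 * ((((p - k : ℕ) : ZMod (p^4)))⁻¹)^5)
      + (-80 * (p : ZMod (p^4))^3) * ((((k : ZMod (p^4)))⁻¹)^3 * ((((p - k : ℕ) : ZMod (p^4)))⁻¹)^5) := by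
  have h2p := hp.two_le
  set u := ((k : ZMod (p^4)))⁻¹ with hudef
  set v := (((p - k : ℕ) : ZMod (p^4)))⁻¹ with hvdef
  have hps : (((p - k : ℕ)) : ZMod (p^4)) = (p : ZMod (p^4)) - k := by
    rw [Nat.cast_sub (by omega)]
  have hu : (k : ZMod (p^4)) * u = 1 := ZMod.mul_inv_of_unit _ (unit_cast hp hk1 hk2 4)
  have hunit2 : IsUnit (((p - k : ℕ) : ZMod (p^4))) := unit_cast hp (by omega) (by omega) 4
  have hv : ((p : ZMod (p^4)) - k) * v = 1 := by
    rw [← hps]; exact ZMod.mul_inv_of_unit _ hunit2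
  have hπ : ((p : ZMod (p^4)))^4 = 0 := by rw [← Nat.cast_pow, ZMod.natCast_self]
  have hC : IsUnit ((k : ZMod (p^4))^6 * ((p : ZMod (p^4)) - k)^5) := by
    rw [← hps]; exact ((unit_cast hp hk1 hk2 4).pow 6).mul (hunit2.pow 5)
  apply hC.mul_right_cancel
  have h2 : (k : ZMod (p^4))^2 * u^2 = 1 := by rw [← mul_pow, hu, one_pow]
  have h3 : (k : ZMod (p^4))^3 * u^3 = 1 := by rw [← mul_pow, hu, one_pow]
  have h5 : (k : ZMod (p^4))^5 * u^5 = 1 := by rw [← mul_pow, hu, one_pow]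
  have h6 : (k : ZMod (p^4))^6 * u^6 = 1 := by rw [← mul_pow, hu, one_pow]
  have hv5 : ((p : ZMod (p^4)) - k)^5 * v^5 = 1 := by rw [← mul_pow, hv, one_pow]
  have h25 : ((k : ZMod (p^4))^2 * u^2) * (((p : ZMod (p^4)) - k)^5 * v^5) = 1 := by
    rw [h2, hv5, mul_one]
  have h35 : ((k : ZMod (p^4))^3 * u^3) * (((p : ZMod (p^4)) - k)^5 * v^5) = 1 := by
    rw [h3, hv5, mul_one]
  linear_combination (10 * (p : ZMod (p^4)) * ((p : ZMod (p^4)) - k)^5) * h6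
    + (2 * (k : ZMod (p^4)) * ((p : ZMod (p^4)) - k)^5) * h5 + (2 * (k : ZMod (p^4))^6) * hv5
    - (30 * (p : ZMod (p^4))^2 * (k : ZMod (p^4))^4) * h25
    + (80 * (p : ZMod (p^4))^3 * (k : ZMod (p^4))^3) * h35
    + (90*(k : ZMod (p^4))^2 - 48*(p : ZMod (p^4))*(k : ZMod (p^4))
      + 10*(p : ZMod (p^4))^2) * hπ

end core

section sums
variable {p : ℕ}

lemma unit_two (hp : p.Prime) (h11 : 11 ≤ p) (a : ℕ) : IsUnit (2 : ZMod (p^a)) := by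
  have h := unit_cast (p := p) hp (show 1 ≤ 2 by norm_num) (show 2 ≤ p - 1 by omega) a
  simpa using h

lemma sum8_sq (hp : p.Prime) (h11 : 11 ≤ p) :
    (p : ZMod (p^2)) * ∑ k ∈ Icc 1 (p - 1), (((k : ZMod (p^2)))⁻¹)^8 = 0 := by
  haveI : NeZero (p^2) := ⟨pow_ne_zero _ (by omega)⟩
  have hd : p ∣ p^2 := dvd_pow_self p (by norm_num)
  have hc : p * p = p^2 := by ring
  have h := kill hd hc (∑ k ∈ Icc 1 (p - 1), (((k : ZMod (p^2)))⁻¹)^8) ?_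
  · exact h
  rw [map_sum]
  rw [Finset.sum_congr rfl (fun k hk => ?_)]
  · exact sum8 hp h11
  · rw [Finset.mem_Icc] at hk
    rw [map_pow, map_inv' _ (unit_cast hp hk.1 hk.2 2)]

lemma sum7_sq (hp : p.Prime) (h11 : 11 ≤ p) :
    ∑ k ∈ Icc 1 (p - 1), (((k : ZMod (p^2)))⁻¹)^7 = 0 := by
  haveI : NeZero (p^2) := ⟨pow_ne_zero _ (by omega)⟩
  have key : (2 : ZMod (p^2)) * ∑ k ∈ Icc 1 (p - 1), (((k : ZMod (p^2)))⁻¹)^7 = 2 * 0 := by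
    rw [mul_zero]
    calc (2 : ZMod (p^2)) * ∑ k ∈ Icc 1 (p - 1), (((k : ZMod (p^2)))⁻¹)^7
        = ∑ k ∈ Icc 1 (p - 1),
            ((((k : ZMod (p^2)))⁻¹)^7 + ((((p - k : ℕ) : ZMod (p^2)))⁻¹)^7) := by
          rw [Finset.sum_add_distrib,
            sum_reflect (by omega) (f := fun m => (((m : ZMod (p^2)))⁻¹)^7)]
          ring
      _ = ∑ k ∈ Icc 1 (p - 1), (-7 * (p : ZMod (p^2))) * (((k : ZMod (p^2)))⁻¹)^8 :=
          Finset.sum_congr rfl (fun k hk => by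
            rw [Finset.mem_Icc] at hk; exact perk_B hp hk.1 hk.2)
      _ = (-7) * ((p : ZMod (p^2)) * ∑ k ∈ Icc 1 (p - 1), (((k : ZMod (p^2)))⁻¹)^8) := by
          rw [← Finset.mul_sum]; ring
      _ = 0 := by rw [sum8_sq hp h11, mul_zero]
  exact (unit_two hp h11 2).mul_left_cancel key

lemma sumA_sq (hp : p.Prime) (h11 : 11 ≤ p) :
    ∑ k ∈ Icc 1 (p - 1), (((k : ZMod (p^2)))⁻¹)^2 * ((((p - k : ℕ) : ZMod (p^2)))⁻¹)^5 = 0 := by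
  haveI : NeZero (p^2) := ⟨pow_ne_zero _ (by omega)⟩
  calc ∑ k ∈ Icc 1 (p - 1), (((k : ZMod (p^2)))⁻¹)^2 * ((((p - k : ℕ) : ZMod (p^2)))⁻¹)^5
      = ∑ k ∈ Icc 1 (p - 1),
          ((-1) * (((k : ZMod (p^2)))⁻¹)^7 + (-5 * (p : ZMod (p^2))) * (((k : ZMod (p^2)))⁻¹)^8) :=
        Finset.sum_congr rfl (fun k hk => by
          rw [Finset.mem_Icc] at hk; exact perk_A hp hk.1 hk.2)
    _ = (-1) * (∑ k ∈ Icc 1 (p - 1), (((k : ZMod (p^2)))⁻¹)^7)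
        + (-5) * ((p : ZMod (p^2)) * ∑ k ∈ Icc 1 (p - 1), (((k : ZMod (p^2)))⁻¹)^8) := by
        rw [Finset.sum_add_distrib, ← Finset.mul_sum, ← Finset.mul_sum]; ring
    _ = 0 := by rw [sum7_sq hp h11, sum8_sq hp h11]; ring

lemma sumB_p (hp : p.Prime) (h11 : 11 ≤ p) :
    ∑ k ∈ Icc 1 (p - 1), (((k : ZMod p))⁻¹)^3 * ((((p - k : ℕ) : ZMod p))⁻¹)^5 = 0 := by
  haveI : Fact p.Prime := ⟨hp⟩
  calc ∑ k ∈ Icc 1 (p - 1), (((k : ZMod p))⁻¹)^3 * ((((p - k : ℕ) : ZMod p))⁻¹)^5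
      = ∑ k ∈ Icc 1 (p - 1), (-1) * (((k : ZMod p))⁻¹)^8 :=
        Finset.sum_congr rfl (fun k hk => by
          rw [Finset.mem_Icc] at hk
          have hps : (((p - k : ℕ)) : ZMod p) = -(k : ZMod p) := by
            rw [Nat.cast_sub (by omega), ZMod.natCast_self, zero_sub]
          rw [hps, inv_neg]; ring)
    _ = 0 := by rw [← Finset.mul_sum, sum8 hp h11]; ring

lemma core (hp : p.Prime) (h11 : 11 ≤ p) :
    5 * (p : ZMod (p^4)) * (∑ k ∈ Icc 1 (p - 1), (((k : ZMod (p^4)))⁻¹)^6)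
      + 2 * (∑ k ∈ Icc 1 (p - 1), (((k : ZMod (p^4)))⁻¹)^5) = 0 := by
  haveI : NeZero (p^4) := ⟨pow_ne_zero _ (by omega)⟩
  have killA : (p : ZMod (p^4))^2
      * ∑ k ∈ Icc 1 (p - 1), (((k : ZMod (p^4)))⁻¹)^2 * ((((p - k : ℕ) : ZMod (p^4)))⁻¹)^5
      = 0 := by
    have hd : p^2 ∣ p^4 := pow_dvd_pow p (by norm_num)
    have hc : p^2 * p^2 = p^4 := by ring
    have h := kill hd hc
      (∑ k ∈ Icc 1 (p - 1), (((k : ZMod (p^4)))⁻¹)^2 * ((((p - k : ℕ) : ZMod (p^4)))⁻¹)^5) ?_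
    · rw [Nat.cast_pow] at h; exact h
    rw [map_sum]
    rw [Finset.sum_congr rfl (fun k hk => ?_)]
    · exact sumA_sq hp h11
    · rw [Finset.mem_Icc] at hk
      rw [map_mul, map_pow, map_pow, map_inv' _ (unit_cast hp hk.1 hk.2 4),
        map_inv' _ (unit_cast hp (show 1 ≤ p - k by omega) (show p - k ≤ p - 1 by omega) 4)]
  have killB : (p : ZMod (p^4))^3
      * ∑ k ∈ Icc 1 (p - 1), (((k : ZMod (p^4)))⁻¹)^3 * ((((p - k : ℕ) : ZMod (p^4)))⁻¹)^5
      = 0 := by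
    have hd : p ∣ p^4 := dvd_pow_self p (by norm_num)
    have hc : p * p^3 = p^4 := by ring
    have h := kill hd hc
      (∑ k ∈ Icc 1 (p - 1), (((k : ZMod (p^4)))⁻¹)^3 * ((((p - k : ℕ) : ZMod (p^4)))⁻¹)^5) ?_
    · rw [Nat.cast_pow] at h; exact h
    rw [map_sum]
    rw [Finset.sum_congr rfl (fun k hk => ?_)]
    · exact sumB_p hp h11
    · rw [Finset.mem_Icc] at hk
      rw [map_mul, map_pow, map_pow, map_inv' _ (unit_cast hp hk.1 hk.2 4),
        map_inv' _ (unit_cast hp (show 1 ≤ p - k by omega) (show p - k ≤ p - 1 by omega) 4)]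
  have key : (2 : ZMod (p^4)) * (5 * (p : ZMod (p^4)) * (∑ k ∈ Icc 1 (p - 1), (((k : ZMod (p^4)))⁻¹)^6)
      + 2 * (∑ k ∈ Icc 1 (p - 1), (((k : ZMod (p^4)))⁻¹)^5)) = 2 * 0 := by
    rw [mul_zero]
    calc (2 : ZMod (p^4)) * (5 * (p : ZMod (p^4)) * (∑ k ∈ Icc 1 (p - 1), (((k : ZMod (p^4)))⁻¹)^6)
        + 2 * (∑ k ∈ Icc 1 (p - 1), (((k : ZMod (p^4)))⁻¹)^5))
        = ∑ k ∈ Icc 1 (p - 1), (10 * (p : ZMod (p^4)) * (((k : ZMod (p^4)))⁻¹)^6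
            + 2 * (((k : ZMod (p^4)))⁻¹)^5 + 2 * ((((p - k : ℕ) : ZMod (p^4)))⁻¹)^5) := by
          rw [Finset.sum_add_distrib, Finset.sum_add_distrib, ← Finset.mul_sum, ← Finset.mul_sum,
            ← Finset.mul_sum, sum_reflect (by omega) (f := fun m => (((m : ZMod (p^4)))⁻¹)^5)]
          ring
      _ = ∑ k ∈ Icc 1 (p - 1),
            ((30 * (p : ZMod (p^4))^2) * ((((k : ZMod (p^4)))⁻¹)^2 * ((((p - k : ℕ) : ZMod (p^4)))⁻¹)^5)
            + (-80 * (p : ZMod (p^4))^3) * ((((k : ZMod (p^4)))⁻¹)^3 * ((((p - k : ℕ) : ZMod (p^4)))⁻¹)^5)) :=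
          Finset.sum_congr rfl (fun k hk => by
            rw [Finset.mem_Icc] at hk; exact perk_main hp hk.1 hk.2)
      _ = 30 * ((p : ZMod (p^4))^2
            * ∑ k ∈ Icc 1 (p - 1), (((k : ZMod (p^4)))⁻¹)^2 * ((((p - k : ℕ) : ZMod (p^4)))⁻¹)^5)
          + (-80) * ((p : ZMod (p^4))^3
            * ∑ k ∈ Icc 1 (p - 1), (((k : ZMod (p^4)))⁻¹)^3 * ((((p - k : ℕ) : ZMod (p^4)))⁻¹)^5) := by
          rw [Finset.sum_add_distrib, ← Finset.mul_sum, ← Finset.mul_sum]; ring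
      _ = 0 := by rw [killA, killB]; ring
  exact (unit_two hp h11 4).mul_left_cancel key

end sums

theorem stmt15 (p : ℕ) (hp : p.Prime) (h11 : 11 ≤ p) :
    PadicCong p 4 ((p : ℚ) * (∑ k ∈ Finset.Icc 1 (p - 1), (1 : ℚ) / (k : ℚ) ^ 6)) (-(2 / 5 : ℚ) * (∑ k ∈ Finset.Icc 1 (p - 1), (1 : ℚ) / (k : ℚ) ^ 5)) := by
  unfold PadicCong
  haveI : Fact p.Prime := ⟨hp⟩
  haveI : NeZero (p^4) := ⟨pow_ne_zero _ (by omega)⟩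
  set s := Finset.Icc 1 (p - 1) with hs
  set M : ℕ := 5 * ∏ j ∈ s, j^6 with hM
  set N : ℕ := 5*p*(∑ k ∈ s, (∏ j ∈ s.erase k, j)^6)
      + 2*(∑ k ∈ s, k*(∏ j ∈ s.erase k, j)^6) with hN
  have hk0 : ∀ k ∈ s, (k : ℚ) ≠ 0 := by
    intro k hk
    rw [hs, Finset.mem_Icc] at hk
    exact_mod_cast Nat.one_le_iff_ne_zero.mp hk.1
  -- step 1 : algebraic identity over ℚ
  have hMc : ((M : ℕ) : ℚ) = 5 * ∏ j ∈ s, (j : ℚ)^6 := by rw [hM]; push_cast; ring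
  have hNc : ((N : ℕ) : ℚ) = 5*(p:ℚ)*(∑ k ∈ s, (∏ j ∈ s.erase k, (j:ℚ))^6)
      + 2*(∑ k ∈ s, (k:ℚ)*(∏ j ∈ s.erase k, (j:ℚ))^6) := by rw [hN]; push_cast; ring
  have key6 : ∀ k ∈ s, (1 / (k:ℚ)^6) * (∏ j ∈ s, (j:ℚ)^6) = (∏ j ∈ s.erase k, (j:ℚ))^6 := by
    intro k hk
    rw [← Finset.prod_pow, ← Finset.mul_prod_erase s (fun j => (j:ℚ)^6) hk]
    have h0 : ((k:ℚ))^6 ≠ 0 := pow_ne_zero _ (hk0 k hk)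
    field_simp
    exact mul_div_cancel_left₀ _ (by simpa using hk0 k hk)
  have key5 : ∀ k ∈ s, (1 / (k:ℚ)^5) * (∏ j ∈ s, (j:ℚ)^6) = (k:ℚ) * (∏ j ∈ s.erase k, (j:ℚ))^6 := by
    intro k hk
    rw [← Finset.prod_pow, ← Finset.mul_prod_erase s (fun j => (j:ℚ)^6) hk]
    have h0 : (k:ℚ) ≠ 0 := hk0 k hk
    field_simp
  have hstep1 : ((p : ℚ) * (∑ k ∈ s, (1 : ℚ) / (k : ℚ) ^ 6) -
      (-(2 / 5 : ℚ) * (∑ k ∈ s, (1 : ℚ) / (k : ℚ) ^ 5))) * ((M : ℕ) : ℚ) = ((N : ℕ) : ℚ) := by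
    calc ((p : ℚ) * (∑ k ∈ s, (1 : ℚ) / (k : ℚ) ^ 6) -
        (-(2 / 5 : ℚ) * (∑ k ∈ s, (1 : ℚ) / (k : ℚ) ^ 5))) * ((M : ℕ) : ℚ)
        = 5*(p:ℚ)*((∑ k ∈ s, (1:ℚ)/(k:ℚ)^6) * ∏ j ∈ s, (j:ℚ)^6)
          + 2*((∑ k ∈ s, (1:ℚ)/(k:ℚ)^5) * ∏ j ∈ s, (j:ℚ)^6) := by rw [hMc]; ring
      _ = ((N : ℕ) : ℚ) := by
          rw [Finset.sum_mul, Finset.sum_mul, Finset.sum_congr rfl key6,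
            Finset.sum_congr rfl key5, hNc]
  -- step 2 : M has norm 1
  have hM1 : padicNorm p ((M : ℕ) : ℚ) = 1 := by
    rw [padicNorm.nat_eq_one_iff]
    intro hd
    rcases (Nat.Prime.dvd_mul hp).mp hd with h5 | hprod
    · have := Nat.le_of_dvd (by norm_num) h5; omega
    · obtain ⟨k, hk, hdk⟩ := (hp.prime.dvd_finset_prod_iff _).mp hprod
      have hdk' : p ∣ k := hp.prime.dvd_of_dvd_pow hdk
      rw [hs, Finset.mem_Icc] at hk
      have := Nat.le_of_dvd (by omega) hdk'
      omega
  -- step 3 : p^4 ∣ N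
  have hdvd : p^4 ∣ N := by
    rw [← ZMod.natCast_eq_zero_iff]
    have hQZ : ∀ k ∈ s, (∏ j ∈ s.erase k, (j : ZMod (p^4)))
        = ((k : ZMod (p^4)))⁻¹ * ∏ j ∈ s, (j : ZMod (p^4)) := by
      intro k hk
      have hk' : 1 ≤ k ∧ k ≤ p - 1 := by rwa [hs, Finset.mem_Icc] at hk
      have hu : ((k : ZMod (p^4)))⁻¹ * (k : ZMod (p^4)) = 1 :=
        ZMod.inv_mul_of_unit _ (unit_cast hp hk'.1 hk'.2 4)
      calc ∏ j ∈ s.erase k, (j : ZMod (p^4))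
          = (((k : ZMod (p^4)))⁻¹ * (k : ZMod (p^4))) * ∏ j ∈ s.erase k, (j : ZMod (p^4)) := by
            rw [hu, one_mul]
        _ = ((k : ZMod (p^4)))⁻¹ * ∏ j ∈ s, (j : ZMod (p^4)) := by
            rw [mul_assoc, Finset.mul_prod_erase s (fun j => (j : ZMod (p^4))) hk]
    have e1 : ∀ k ∈ s, (∏ j ∈ s.erase k, (j : ZMod (p^4)))^6
        = (((k : ZMod (p^4)))⁻¹)^6 * (∏ j ∈ s, (j : ZMod (p^4)))^6 := by
      intro k hk; rw [hQZ k hk, mul_pow]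
    have e2 : ∀ k ∈ s, (k : ZMod (p^4)) * (∏ j ∈ s.erase k, (j : ZMod (p^4)))^6
        = (((k : ZMod (p^4)))⁻¹)^5 * (∏ j ∈ s, (j : ZMod (p^4)))^6 := by
      intro k hk
      have hk' : 1 ≤ k ∧ k ≤ p - 1 := by rwa [hs, Finset.mem_Icc] at hk
      have hu : (k : ZMod (p^4)) * ((k : ZMod (p^4)))⁻¹ = 1 :=
        ZMod.mul_inv_of_unit _ (unit_cast hp hk'.1 hk'.2 4)
      rw [hQZ k hk, mul_pow]
      linear_combination ((((k : ZMod (p^4)))⁻¹)^5 * (∏ j ∈ s, (j : ZMod (p^4)))^6) * hu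
    have hcore := core hp h11
    rw [hN]
    push_cast
    rw [Finset.sum_congr rfl e1, Finset.sum_congr rfl e2, ← Finset.sum_mul, ← Finset.sum_mul]
    rw [← hs] at hcore
    linear_combination (∏ j ∈ s, (j : ZMod (p^4)))^6 * hcore
  -- conclude
  have hXM : padicNorm p ((p : ℚ) * (∑ k ∈ s, (1 : ℚ) / (k : ℚ) ^ 6) -
      (-(2 / 5 : ℚ) * (∑ k ∈ s, (1 : ℚ) / (k : ℚ) ^ 5)))
      = padicNorm p (((N : ℤ) : ℚ)) := by
    rw [show (((N : ℤ)) : ℚ) = ((N : ℕ) : ℚ) by push_cast; ring, ← hstep1, padicNorm.mul, hM1,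
      mul_one]
  rw [hXM]
  have hdvd' : ((p^4 : ℕ) : ℤ) ∣ (N : ℤ) := Int.natCast_dvd_natCast.mpr hdvd
  exact_mod_cast padicNorm.dvd_iff_norm_le.mp hdvd'
end

section
/- For any prime p and any positive integer r, 2·∑_{k=1}^{p-1} 1/k ≡ -∑_{i=1}^{r} p^i · ∑_{k=1}^{p-1} 1/k^{i+1} (mod p^{r+1}). -/
lemma normPpow (p : ℕ) (hp : p.Prime) (n : ℕ) :
    padicNorm p ((p : ℚ) ^ n) = (p : ℚ) ^ (-(n : ℤ)) := by
  haveI : Fact p.Prime := ⟨hp⟩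
  induction n with
  | zero => simp [padicNorm.one]
  | succ n ih =>
    rw [pow_succ, padicNorm.mul, ih, padicNorm.padicNorm_p hp.one_lt]
    rw [show (-(↑(n+1) : ℤ)) = -(n:ℤ) + (-1) by push_cast; ring, zpow_add₀]
    · simp
    · exact_mod_cast hp.pos.ne'

lemma termId (p r k : ℕ) (hk1 : 1 ≤ k) (hkp : k < p) :
    1/(k:ℚ) + 1/((p:ℚ) - k) + ∑ j ∈ Finset.Icc 1 r, (p:ℚ)^j/(k:ℚ)^(j+1)
      = -(p:ℚ)^(r+1)/((k:ℚ)^(r+1)*((k:ℚ)-p)) := by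
  have hk0 : (k:ℚ) ≠ 0 := by positivity
  have hne : (k:ℚ) - p ≠ 0 := by
    have : (k:ℚ) < p := by exact_mod_cast hkp
    linarith
  have hne' : (p:ℚ) - k ≠ 0 := by
    have : (k:ℚ) < p := by exact_mod_cast hkp
    linarith
  induction r with
  | zero =>
    rw [show Finset.Icc 1 0 = ∅ by rfl, Finset.sum_empty, add_zero]
    field_simp
    ring
  | succ n ih =>
    rw [Finset.sum_Icc_succ_top (by omega : 1 ≤ n + 1), ← add_assoc, ih]
    field_simp
    ring

theorem stmt16 (p : ℕ) (hp : p.Prime) (r : ℕ) (hr : 1 ≤ r) :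
    PadicCong p (r + 1) (2 * (∑ k ∈ Finset.Icc 1 (p - 1), (1 : ℚ) / (k : ℚ)))
      (-(∑ i ∈ Finset.Icc 1 r, (p : ℚ) ^ i *
          ∑ k ∈ Finset.Icc 1 (p - 1), (1 : ℚ) / (k : ℚ) ^ (i + 1))) := by
  haveI : Fact p.Prime := ⟨hp⟩
  have hp2 : 2 ≤ p := hp.two_le
  unfold PadicCong
  rw [sub_neg_eq_add]
  -- reflection: ∑ 1/k = ∑ 1/(p - k)
  have hrefl : ∑ k ∈ Finset.Icc 1 (p-1), (1:ℚ)/(k:ℚ)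
      = ∑ k ∈ Finset.Icc 1 (p-1), (1:ℚ)/((p:ℚ) - k) := by
    refine Finset.sum_nbij' (i := fun k => p - k) (j := fun k => p - k) ?_ ?_ ?_ ?_ ?_
    · intro a ha; simp only [Finset.mem_Icc] at *; omega
    · intro a ha; simp only [Finset.mem_Icc] at *; omega
    · intro a ha; simp only [Finset.mem_Icc] at ha; show p - (p - a) = a; omega
    · intro a ha; simp only [Finset.mem_Icc] at ha; show p - (p - a) = a; omega
    · intro a ha
      simp only [Finset.mem_Icc] at ha
      have : ((p - a : ℕ) : ℚ) = (p:ℚ) - a := by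
        push_cast [Nat.cast_sub (by omega : a ≤ p)]; ring
      rw [this]
      congr 1
      push_cast [Nat.cast_sub (by omega : a ≤ p)]
      ring
  -- rewrite the double sum
  have hswap : ∑ i ∈ Finset.Icc 1 r, (p:ℚ)^i * ∑ k ∈ Finset.Icc 1 (p-1), (1:ℚ)/(k:ℚ)^(i+1)
      = ∑ k ∈ Finset.Icc 1 (p-1), ∑ i ∈ Finset.Icc 1 r, (p:ℚ)^i/(k:ℚ)^(i+1) := by
    simp_rw [Finset.mul_sum, mul_one_div]
    rw [Finset.sum_comm]
  have key : 2 * (∑ k ∈ Finset.Icc 1 (p-1), (1:ℚ)/(k:ℚ))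
      + ∑ i ∈ Finset.Icc 1 r, (p:ℚ)^i * ∑ k ∈ Finset.Icc 1 (p-1), (1:ℚ)/(k:ℚ)^(i+1)
      = ∑ k ∈ Finset.Icc 1 (p-1), (-(p:ℚ)^(r+1)/((k:ℚ)^(r+1)*((k:ℚ)-p))) := by
    rw [hswap, two_mul]
    nth_rewrite 2 [hrefl]
    rw [← Finset.sum_add_distrib, ← Finset.sum_add_distrib]
    refine Finset.sum_congr rfl ?_
    intro k hk
    simp only [Finset.mem_Icc] at hk
    exact termId p r k hk.1 (by omega)
  rw [key]
  refine padicNorm.sum_le' ?_ (by positivity)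
  intro k hk
  simp only [Finset.mem_Icc] at hk
  have hk1 : 1 ≤ k := hk.1
  have hkp : k < p := by omega
  have hk0 : (k:ℚ) ≠ 0 := by positivity
  have hnd : ¬ (p:ℤ) ∣ ((k:ℤ) - p) := by
    intro h
    have hk' : (p:ℤ) ∣ (k:ℤ) := by
      have := dvd_add h (dvd_refl (p:ℤ))
      simpa using this
    have := Int.natCast_dvd_natCast.mp hk'
    exact absurd (Nat.le_of_dvd (by omega) this) (by omega)
  have h1 : padicNorm p ((k:ℚ) - p) = 1 := by
    have : ((k:ℚ) - p) = (((k:ℤ) - p : ℤ) : ℚ) := by push_cast; ring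
    rw [this, padicNorm.int_eq_one_iff]
    exact hnd
  have h2 : padicNorm p ((k:ℚ)^(r+1)) = 1 := by
    have := (padicNorm.nat_eq_one_iff (p := p) k).mpr (by
      intro h; exact absurd (Nat.le_of_dvd (by omega) h) (by omega))
    calc padicNorm p ((k:ℚ)^(r+1)) = (padicNorm p (k:ℚ))^(r+1) := by
          induction (r+1) with
          | zero => simp [padicNorm.one]
          | succ n ih => rw [pow_succ, pow_succ, padicNorm.mul, ih]
      _ = 1 := by rw [this]; simp
  rw [neg_div, padicNorm.neg, padicNorm.div, padicNorm.mul, h1, h2,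
    normPpow p hp (r+1)]
  simp
end

section
/- For any prime p ≥ 11 (with p-1 not dividing 4), B_{p²-p-4} ≡ (18p+40)/25 · B_{p-5} - (7p+12)/18 · B_{2p-6} (mod p²). -/
set_option linter.unusedSectionVars false
set_option maxHeartbeats 1000000

namespace K18

open Finset

variable {p : ℕ} [hp : Fact p.Prime]

/-- `padicNorm p x ≤ p ^ (-k)`. -/
def NB (p : ℕ) (k : ℤ) (x : ℚ) : Prop := padicNorm p x ≤ (p : ℚ) ^ (-k)

lemma one_lt_pQ : (1 : ℚ) < p := by exact_mod_cast hp.out.one_lt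

lemma pQ_pos : (0 : ℚ) < p := lt_trans one_pos one_lt_pQ

lemma NB_zero (k : ℤ) : NB p k 0 := by
  simp only [NB, padicNorm.zero]
  exact zpow_nonneg (Nat.cast_nonneg p) _

lemma NB.add {k : ℤ} {x y : ℚ} (hx : NB p k x) (hy : NB p k y) : NB p k (x + y) :=
  le_trans padicNorm.nonarchimedean (max_le hx hy)

lemma NB.neg {k : ℤ} {x : ℚ} (hx : NB p k x) : NB p k (-x) := by
  rwa [NB, padicNorm.neg]

lemma NB.sub {k : ℤ} {x y : ℚ} (hx : NB p k x) (hy : NB p k y) : NB p k (x - y) := by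
  rw [sub_eq_add_neg]; exact hx.add hy.neg

lemma NB.mul {k l : ℤ} {x y : ℚ} (hx : NB p k x) (hy : NB p l y) : NB p (k + l) (x * y) := by
  rw [NB, padicNorm.mul]
  calc padicNorm p x * padicNorm p y ≤ (p:ℚ) ^ (-k) * (p:ℚ) ^ (-l) :=
        mul_le_mul hx hy (padicNorm.nonneg y) (zpow_nonneg (Nat.cast_nonneg p) _)
    _ = (p:ℚ) ^ (-(k+l)) := by rw [← zpow_add₀ (ne_of_gt pQ_pos)]; ring_nf

lemma NB.mono {k l : ℤ} {x : ℚ} (h : l ≤ k) (hx : NB p k x) : NB p l x := by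
  refine le_trans hx ?_
  exact zpow_le_zpow_right₀ (le_of_lt one_lt_pQ) (by omega)

lemma NB_int (z : ℤ) : NB p 0 (z : ℚ) := by
  simpa [NB] using padicNorm.of_int z

lemma NB_nat (n : ℕ) : NB p 0 (n : ℚ) := by
  simpa using NB_int (p := p) (n : ℤ)

lemma NB_of_dvd {k : ℕ} {z : ℤ} (h : (p:ℤ)^k ∣ z) : NB p k (z : ℚ) := by
  have := (padicNorm.dvd_iff_norm_le (p := p) (n := k) (z := z)).1 (by exact_mod_cast h)
  simpa [NB] using this

lemma norm_int_eq_one {z : ℤ} (h : ¬ (p:ℤ) ∣ z) : padicNorm p (z : ℚ) = 1 :=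
  (padicNorm.int_eq_one_iff z).2 h

lemma norm_nat_eq_one {z : ℕ} (h : ¬ p ∣ z) : padicNorm p (z : ℚ) = 1 :=
  (padicNorm.nat_eq_one_iff z).2 h

lemma NB_div_unit {k : ℤ} {x u : ℚ} (hu : padicNorm p u = 1) (hx : NB p k x) :
    NB p k (x / u) := by
  rw [NB, padicNorm.div, hu, div_one]; exact hx

lemma NB_unit_cancel {k : ℤ} {x u : ℚ} (hu : padicNorm p u = 1) (hx : NB p k (u * x)) :
    NB p k x := by
  have hu0 : u ≠ 0 := by intro h; rw [h] at hu; simp [padicNorm.zero] at hu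
  have := NB_div_unit hu hx
  have h2 : u * x / u = x := by field_simp
  rwa [h2] at this

lemma norm_p_pow (j : ℕ) : padicNorm p ((p:ℚ)^j) = (p:ℚ)^(-(j:ℤ)) := by
  induction j with
  | zero => simp
  | succ m ihm =>
    rw [pow_succ, padicNorm.mul, ihm, padicNorm.padicNorm_p_of_prime]
    rw [← zpow_neg_one, ← zpow_add₀ (ne_of_gt (pQ_pos (p := p)))]
    congr 1; push_cast; ring

lemma NB_div_pPow {k : ℤ} (j : ℕ) {x : ℚ} (hx : NB p k x) : NB p (k - j) (x / (p:ℚ)^j) := by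
  rw [NB, padicNorm.div, norm_p_pow, div_eq_mul_inv, ← zpow_neg, neg_neg]
  calc padicNorm p x * (p:ℚ)^((j:ℤ)) ≤ (p:ℚ)^(-k) * (p:ℚ)^((j:ℤ)) := by
        apply mul_le_mul_of_nonneg_right hx; positivity
    _ = (p:ℚ)^(-(k - j)) := by rw [← zpow_add₀ (ne_of_gt pQ_pos)]; ring_nf

lemma NB_sum {k : ℤ} {α : Type*} {s : Finset α} {f : α → ℚ}
    (h : ∀ i ∈ s, NB p k (f i)) : NB p k (∑ i ∈ s, f i) := by
  rcases s.eq_empty_or_nonempty with hs | hs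
  · subst hs; simpa using NB_zero k
  · exact padicNorm.sum_le hs h

lemma val_le (h11 : 11 ≤ p) {k : ℕ} (hk : 1 ≤ k) :
    (min k 10 : ℤ) ≤ (k : ℤ) - padicValNat p k := by
  set v := padicValNat p k with hv
  by_cases hv0 : v = 0
  · rw [hv0]; push_cast; omega
  · have hd : p ^ v ∣ k := pow_padicValNat_dvd
    have h1 : 11 ^ v ≤ k := le_trans (Nat.pow_le_pow_left h11 _) (Nat.le_of_dvd hk hd)
    have h2 : (1 : ℤ) + v * 10 ≤ 11 ^ v := by
      have := one_add_mul_le_pow (a := (10:ℤ)) (by norm_num) v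
      simpa using this
    have h1' : (11:ℤ) ^ v ≤ k := by exact_mod_cast h1
    set e : ℤ := (11:ℤ) ^ v
    omega

lemma NB_pow_div (h11 : 11 ≤ p) {k : ℕ} (hk : 1 ≤ k) :
    NB p (min k 10) ((p:ℚ)^k / k) := by
  have hk0' : k ≠ 0 := by omega
  have hk0 : (k : ℚ) ≠ 0 := Nat.cast_ne_zero.mpr hk0'
  set v := padicValNat p k with hv
  obtain ⟨c, hc⟩ : p ^ v ∣ k := pow_padicValNat_dvd
  have hc0 : c ≠ 0 := by rintro rfl; simp at hc; omega
  have hpc : ¬ p ∣ c := by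
    intro hdvd
    have : p ^ (v + 1) ∣ k := by
      obtain ⟨c', rfl⟩ := hdvd
      exact ⟨c', by rw [hc]; ring⟩
    exact pow_succ_padicValNat_not_dvd hk0' this
  have hvk : v ≤ k := by
    have h1 : p ^ v ≤ k := Nat.le_of_dvd (by omega) pow_padicValNat_dvd
    have h2 : v < p ^ v := Nat.lt_pow_self hp.out.one_lt
    omega
  have hc0' : (c : ℚ) ≠ 0 := Nat.cast_ne_zero.mpr hc0
  have hsplit : ((p:ℚ)^k / k) = (p:ℚ)^(k - v) / c := by
    have hck : (k:ℚ) = (p:ℚ)^v * c := by rw [hc]; push_cast; ring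
    rw [hck, show (p:ℚ)^k = (p:ℚ)^(k-v) * (p:ℚ)^v by rw [← pow_add]; congr 1; omega]
    rw [div_eq_div_iff (by positivity) hc0']
    ring
  rw [NB, hsplit, padicNorm.div, norm_nat_eq_one hpc, div_one, norm_p_pow]
  apply zpow_le_zpow_right₀ (le_of_lt (one_lt_pQ (p := p)))
  have hvl := val_le h11 hk
  omega

lemma NB_pPow (k : ℕ) : NB p k ((p:ℚ)^k) := by
  have := NB_of_dvd (p := p) (k := k) (dvd_refl ((p:ℤ)^k))
  push_cast at this
  exact this

lemma faulhaber_Q (N n : ℕ) :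
    ((∑ k ∈ range N, k ^ n : ℕ) : ℚ)
      = (N:ℚ) * bernoulli n
        + ∑ i ∈ range n, bernoulli i * (n.choose i)
            * ((N:ℚ) ^ (n + 1 - i) / ((n + 1 - i : ℕ) : ℚ)) := by
  have hcast : ((∑ k ∈ range N, k ^ n : ℕ) : ℚ) = ∑ k ∈ range N, (k:ℚ) ^ n := by push_cast; rfl
  rw [hcast, _root_.sum_range_pow, sum_range_succ]
  have hne : ((n:ℚ) + 1) ≠ 0 := by positivity
  have hlast : bernoulli n * ((n + 1).choose n : ℚ) * (N:ℚ) ^ (n + 1 - n) / ((n:ℚ) + 1)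
      = (N:ℚ) * bernoulli n := by
    rw [Nat.choose_succ_self_right, show n + 1 - n = 1 by omega]
    field_simp
    push_cast
    ring
  rw [hlast, add_comm]
  congr 1
  apply sum_congr rfl
  intro i hi
  have hi' : i < n := mem_range.mp hi
  have hccQ : (n.choose i : ℚ) * ((n:ℚ) + 1) = ((n + 1).choose i : ℚ) * ((n + 1 - i : ℕ) : ℚ) := by
    have := Nat.choose_mul_succ_eq n i
    have h2 := congrArg (Nat.cast : ℕ → ℚ) this
    push_cast at h2
    rw [Nat.cast_sub (by omega)] at h2
    push_cast at h2
    rw [Nat.cast_sub (by omega)]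
    push_cast
    linarith [h2]
  have h2 : ((n + 1 - i : ℕ) : ℚ) ≠ 0 := Nat.cast_ne_zero.mpr (by omega)
  rw [show bernoulli i * (n.choose i : ℚ) * ((N:ℚ)^(n + 1 - i) / ((n + 1 - i:ℕ):ℚ))
      = bernoulli i * (n.choose i : ℚ) * (N:ℚ)^(n + 1 - i) / ((n + 1 - i:ℕ):ℚ)
    from (mul_div_assoc _ _ _).symm]
  rw [div_eq_div_iff hne h2]
  linear_combination (-(bernoulli i * (N:ℚ) ^ (n + 1 - i))) * hccQ

theorem bern_NB (h11 : 11 ≤ p) : ∀ n, NB p (-1) (bernoulli n) := by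
  intro n
  induction n using Nat.strong_induction_on with
  | _ n ih =>
    have hpB : NB p 0 ((p:ℚ) * bernoulli n) := by
      have heq : (p:ℚ) * bernoulli n
          = ((∑ k ∈ range p, k ^ n : ℕ) : ℚ)
            - ∑ i ∈ range n, bernoulli i * (n.choose i)
                * ((p:ℚ) ^ (n + 1 - i) / ((n + 1 - i : ℕ) : ℚ)) := by
        rw [faulhaber_Q p n]; ring
      rw [heq]
      refine (NB_nat _).sub (NB_sum ?_)
      intro i hi
      have hi' : i < n := mem_range.mp hi
      have hterm := ((ih i hi').mul (NB_nat (n.choose i))).mul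
          (NB_pow_div h11 (k := n + 1 - i) (by omega))
      refine NB.mono ?_ hterm
      have hc : (2:ℤ) ≤ ((n + 1 - i : ℕ) : ℤ) := by exact_mod_cast (by omega : 2 ≤ n + 1 - i)
      omega
    have hb : bernoulli n = ((p:ℚ) * bernoulli n) / (p:ℚ)^1 := by
      have : (p:ℚ) ≠ 0 := ne_of_gt pQ_pos
      field_simp
    rw [hb]
    have := NB_div_pPow (p := p) 1 hpB
    simpa using this

theorem S2_NB (h11 : 11 ≤ p) {n : ℕ} (h6 : 6 ≤ n) (he : Even n) :
    NB p 4 (((∑ k ∈ range (p^2), k ^ n : ℕ) : ℚ) - ((p:ℚ))^2 * bernoulli n) := by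
  have heq : ((∑ k ∈ range (p^2), k ^ n : ℕ) : ℚ) - (p:ℚ)^2 * bernoulli n
      = ∑ i ∈ range n, bernoulli i * (n.choose i)
          * (((p^2 : ℕ):ℚ) ^ (n + 1 - i) / ((n + 1 - i : ℕ) : ℚ)) := by
    rw [faulhaber_Q (p^2) n]
    push_cast
    ring
  rw [heq]
  refine NB_sum ?_
  intro i hi
  have hi' : i < n := mem_range.mp hi
  by_cases hio : i = n - 1
  · have hodd : Odd i := by
      subst hio
      exact Nat.Even.sub_odd (by omega) he odd_one
    rw [bernoulli_eq_bernoulli'_of_ne_one (by omega), bernoulli'_eq_zero_of_odd hodd (by omega)]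
    simpa using NB_zero (p := p) 4
  · have hk3 : 3 ≤ n + 1 - i := by omega
    have hsp : (((p^2:ℕ):ℚ)) ^ (n + 1 - i) / ((n + 1 - i : ℕ):ℚ)
        = (p:ℚ)^(n + 1 - i) * ((p:ℚ)^(n + 1 - i) / ((n + 1 - i : ℕ):ℚ)) := by
      push_cast
      rw [← pow_mul, show 2*(n + 1 - i) = (n + 1 - i) + (n + 1 - i) by ring, pow_add]
      ring
    rw [hsp]
    have hterm := ((bern_NB h11 i).mul (NB_nat (n.choose i))).mul
        ((NB_pPow (n + 1 - i)).mul (NB_pow_div h11 (k := n + 1 - i) (by omega)))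
    refine NB.mono ?_ hterm
    have hc : (3:ℤ) ≤ ((n + 1 - i : ℕ) : ℤ) := by exact_mod_cast hk3
    omega

lemma binom2 (x y : ℤ) (n : ℕ) : x ^ 2 ∣ ((x + y) ^ n - y ^ n - n * y ^ (n - 1) * x) := by
  induction n with
  | zero => simp
  | succ m ih =>
    obtain ⟨t, ht⟩ := ih
    cases m with
    | zero =>
      refine ⟨0, ?_⟩
      push_cast
      ring
    | succ m' =>
      refine ⟨(x + y) * t + (m' + 1) * y ^ m', ?_⟩
      simp only [Nat.succ_sub_one] at ht ⊢
      push_cast at ht ⊢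
      linear_combination (x + y) * ht

lemma fermat_int {b : ℤ} (hb : ¬ (p:ℤ) ∣ b) : (p:ℤ) ∣ b^(p-1) - 1 := by
  have h1 : ((b : ZMod p))^(p-1) = 1 := ZMod.pow_card_sub_one_eq_one (by
    rw [Ne, ZMod.intCast_zmod_eq_zero_iff_dvd]; exact hb)
  have h2 : ((b^(p-1) - 1 : ℤ) : ZMod p) = 0 := by push_cast; rw [h1]; ring
  exact (ZMod.intCast_zmod_eq_zero_iff_dvd _ _).1 h2

end K18

namespace K18

def Sn (N n : ℕ) : ℕ := ∑ j ∈ Finset.range N, j ^ n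

def Qj (N a j : ℕ) : ℕ := j * a / N

def Ph (pp a n : ℕ) : ℤ :=
  ∑ j ∈ Finset.range (pp^2), ((j * a % pp^2 : ℕ) : ℤ) ^ (n - 1) * (Qj (pp^2) a j : ℤ)

def Ps (pp a t : ℕ) : ℤ :=
  ∑ j ∈ Finset.range (pp^2), ((j * a : ℕ) : ℤ) ^ (pp - 6 + t * (pp - 1)) * (Qj (pp^2) a j : ℤ)

def Yi (pp a : ℕ) : ℤ :=
  ∑ j ∈ Finset.range (pp^2),
    ((j * a : ℕ) : ℤ) ^ (pp - 6) * (((j * a : ℕ) : ℤ) ^ (pp - 1) - 1) * (Qj (pp^2) a j : ℤ)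

variable {p : ℕ} [hp : Fact p.Prime]

open Finset

lemma sum_r_pow {a : ℕ} (hcop : Nat.Coprime a (p^2)) (n : ℕ) :
    ∑ j ∈ range (p^2), (j * a % p^2) ^ n = Sn (p^2) n := by
  have h2p : 2 ≤ p := hp.out.two_le
  have hN1 : 1 < p^2 := by nlinarith
  have hN0 : 0 < p^2 := by omega
  obtain ⟨b, -, hb⟩ := Nat.exists_mul_mod_eq_one_of_coprime hcop hN1
  unfold Sn
  refine Finset.sum_nbij' (i := fun j => j * a % p^2) (j := fun x => x * b % p^2)
    (fun j _ => mem_range.mpr (Nat.mod_lt _ hN0))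
    (fun x _ => mem_range.mpr (Nat.mod_lt _ hN0)) ?_ ?_ ?_
  · intro j hj
    have hj' : j < p^2 := mem_range.mp hj
    have hme : (j * a % p^2) * b ≡ j [MOD p^2] := by
      calc (j * a % p^2) * b ≡ j * a * b [MOD p^2] := (Nat.mod_modEq _ _).mul_right b
        _ = j * (a * b) := by ring
        _ ≡ j * 1 [MOD p^2] := Nat.ModEq.mul_left j
            (by rw [Nat.ModEq, hb, Nat.mod_eq_of_lt hN1])
        _ = j := by ring
    have := hme
    rw [Nat.ModEq] at this
    show (j * a % p^2) * b % p^2 = j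
    rw [this, Nat.mod_eq_of_lt hj']
  · intro x hx
    have hx' : x < p^2 := mem_range.mp hx
    have hme : (x * b % p^2) * a ≡ x [MOD p^2] := by
      calc (x * b % p^2) * a ≡ x * b * a [MOD p^2] := (Nat.mod_modEq _ _).mul_right a
        _ = x * (a * b) := by ring
        _ ≡ x * 1 [MOD p^2] := Nat.ModEq.mul_left x
            (by rw [Nat.ModEq, hb, Nat.mod_eq_of_lt hN1])
        _ = x := by ring
    have := hme
    rw [Nat.ModEq] at this
    show (x * b % p^2) * a % p^2 = x
    rw [this, Nat.mod_eq_of_lt hx']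
  · intro j _
    rfl

lemma div_add_mod_int {a j : ℕ} :
    ((j * a : ℕ) : ℤ) = (p:ℤ)^2 * (Qj (p^2) a j : ℤ) + ((j * a % p^2 : ℕ) : ℤ) := by
  have h := Nat.div_add_mod (j * a) (p^2)
  have hZ : ((p^2 * (j * a / p^2) + j * a % p^2 : ℕ) : ℤ) = ((j * a : ℕ) : ℤ) := by
    exact_mod_cast congrArg (Nat.cast : ℕ → ℤ) h
  unfold Qj
  push_cast at hZ ⊢
  linarith

theorem voronoi_int {a : ℕ} (hcop : Nat.Coprime a (p^2)) (n : ℕ) :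
    ((p:ℤ)^2)^2 ∣ ((a:ℤ)^n * (Sn (p^2) n : ℤ) - (Sn (p^2) n : ℤ)
      - n * (p:ℤ)^2 * Ph p a n) := by
  have key : ∀ j ∈ range (p^2), ((p:ℤ)^2)^2 ∣
      (((j*a : ℕ):ℤ)^n - ((j * a % p^2 : ℕ):ℤ)^n
        - n * ((j * a % p^2 : ℕ):ℤ)^(n-1) * ((p:ℤ)^2 * (Qj (p^2) a j : ℤ))) := by
    intro j _
    have hb := binom2 ((p:ℤ)^2 * (Qj (p^2) a j : ℤ)) ((j * a % p^2 : ℕ):ℤ) n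
    have hx2 : ((p:ℤ)^2)^2 ∣ ((p:ℤ)^2 * (Qj (p^2) a j : ℤ))^2 :=
      ⟨(Qj (p^2) a j : ℤ)^2, by ring⟩
    rw [show (p:ℤ)^2 * (Qj (p^2) a j : ℤ) + ((j * a % p^2 : ℕ):ℤ) = ((j*a : ℕ):ℤ)
      from div_add_mod_int.symm] at hb
    exact dvd_trans hx2 hb
  have hsum := Finset.dvd_sum key
  have e1 : (a:ℤ)^n * (Sn (p^2) n : ℤ) = ∑ j ∈ range (p^2), ((j*a:ℕ):ℤ)^n := by
    unfold Sn
    push_cast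
    rw [Finset.mul_sum]
    apply sum_congr rfl
    intro j _
    ring
  have e2 : (Sn (p^2) n : ℤ) = ∑ j ∈ range (p^2), ((j * a % p^2 : ℕ):ℤ)^n := by
    rw [← sum_r_pow hcop n]
    push_cast
    rfl
  have e3 : (n : ℤ) * (p:ℤ)^2 * Ph p a n
      = ∑ j ∈ range (p^2), ((n:ℤ) * ((j * a % p^2:ℕ):ℤ)^(n-1) * ((p:ℤ)^2 * (Qj (p^2) a j : ℤ))) := by
    unfold Ph
    rw [Finset.mul_sum]
    apply sum_congr rfl
    intros
    ring
  rw [e1, e2, e3, ← Finset.sum_sub_distrib, ← Finset.sum_sub_distrib]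
  exact hsum

theorem phi_psi {a : ℕ} (t n : ℕ) (hn : n - 1 = p - 6 + t * (p-1)) :
    (p:ℤ)^2 ∣ (Ph p a n - Ps p a t) := by
  unfold Ph Ps
  rw [← hn, ← Finset.sum_sub_distrib]
  apply Finset.dvd_sum
  intro j _
  rw [← sub_mul]
  have hd : (p:ℤ)^2 ∣ (((j*a % p^2:ℕ):ℤ) - ((j*a:ℕ):ℤ)) := by
    refine ⟨-(Qj (p^2) a j : ℤ), ?_⟩
    have := div_add_mod_int (p := p) (a := a) (j := j)
    linarith
  exact (dvd_trans hd (sub_dvd_pow_sub_pow _ _ _)).mul_right _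

theorem psi_structure (h11 : 11 ≤ p) {a : ℕ} (t : ℕ) :
    (p:ℤ)^2 ∣ (Ps p a t - (Ps p a 0 + t * Yi p a)) := by
  unfold Ps Yi
  rw [Finset.mul_sum, ← Finset.sum_add_distrib, ← Finset.sum_sub_distrib]
  apply Finset.dvd_sum
  intro j _
  set b : ℤ := ((j*a : ℕ):ℤ) with hbdef
  set q : ℤ := (Qj (p^2) a j : ℤ) with hqdef
  have hsplit : b^(p - 6 + t*(p-1)) = b^(p-6) * (b^(p-1))^t := by rw [pow_add, mul_comm t (p-1), pow_mul]
  by_cases hpj : (p:ℤ) ∣ b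
  · have h2 : (p:ℤ)^2 ∣ b^(p-6) := by
      obtain ⟨c, hc⟩ := hpj
      have hbb : b^(p-6) = b^2 * b^(p-8) := by rw [← pow_add]; congr 1; omega
      exact ⟨c^2 * b^(p-8), by rw [hbb, hc]; ring⟩
    have he : b^(p - 6 + t*(p-1))*q - (b^(p - 6 + 0*(p-1))*q + (t:ℤ)*(b^(p-6)*(b^(p-1)-1)*q))
        = b^(p-6) * ((b^(p-1))^t*q - q - t*((b^(p-1)-1)*q)) := by
      rw [hsplit, show p - 6 + 0*(p-1) = p - 6 by omega]
      ring
    rw [he]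
    exact h2.mul_right _
  · have hferm : (p:ℤ) ∣ b^(p-1) - 1 := fermat_int hpj
    have hb2 := binom2 (b^(p-1) - 1) 1 t
    have hx2 : (p:ℤ)^2 ∣ (b^(p-1) - 1)^2 := by
      obtain ⟨c,hc⟩ := hferm
      exact ⟨c^2, by rw [hc]; ring⟩
    have hkey : (p:ℤ)^2 ∣ ((b^(p-1))^t - 1 - t*(b^(p-1)-1)) := by
      have hdd := dvd_trans hx2 hb2
      have e : (b^(p-1) - 1 + 1)^t - 1^t - (t:ℤ)*1^(t-1)*(b^(p-1)-1)
          = (b^(p-1))^t - 1 - t*(b^(p-1)-1) := by ring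
      rwa [e] at hdd
    have he : b^(p - 6 + t*(p-1))*q - (b^(p - 6 + 0*(p-1))*q + (t:ℤ)*(b^(p-6)*(b^(p-1)-1)*q))
        = ((b^(p-1))^t - 1 - (t:ℤ)*(b^(p-1)-1)) * (b^(p-6)*q) := by
      rw [hsplit, show p - 6 + 0*(p-1) = p - 6 by omega]
      ring
    rw [he]
    exact hkey.mul_right _

theorem Y_dvd (h11 : 11 ≤ p) {a : ℕ} : (p:ℤ) ∣ Yi p a := by
  unfold Yi
  apply Finset.dvd_sum
  intro j _
  by_cases hpj : (p:ℤ) ∣ ((j*a:ℕ):ℤ)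
  · exact ((dvd_pow hpj (by omega : p - 6 ≠ 0)).mul_right _).mul_right _
  · exact (((fermat_int hpj).mul_left _).mul_right _)


theorem glue (h11 : 11 ≤ p) {a : ℕ} (hpa : ¬ p ∣ a) (t : ℕ) :
    NB p 2 (((a:ℚ)^(p - 5 + t*(p-1)) - 1) * bernoulli (p - 5 + t*(p-1))
      - ((p - 5 + t*(p-1) : ℕ) : ℚ) * ((Ps p a 0 : ℚ) + (t:ℚ) * (Yi p a : ℚ))) := by
  set n := p - 5 + t*(p-1) with hn
  have hcop : Nat.Coprime a (p^2) :=
    (Nat.coprime_comm.mp ((Nat.Prime.coprime_iff_not_dvd hp.out).mpr hpa)).pow_right 2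
  have h6 : 6 ≤ n := by
    have := hp.out.two_le
    omega
  have heven : Even n := by
    have hodd : Odd p := hp.out.odd_of_ne_two (by omega)
    obtain ⟨m, hm⟩ := hodd
    have h1 : Even (p - 5) := by rw [Nat.even_iff]; omega
    have h2 : Even (t * (p - 1)) := (by rw [Nat.even_iff]; omega : Even (p-1)).mul_left t
    exact h1.add h2
  have hn1 : n - 1 = p - 6 + t*(p-1) := by omega
  have hD : NB p 4 (((Sn (p^2) n : ℕ) : ℚ) - (p:ℚ)^2 * bernoulli n) := S2_NB h11 h6 heven
  have hZ1 : NB p 4 ((a:ℚ)^n * ((Sn (p^2) n : ℕ):ℚ) - ((Sn (p^2) n : ℕ):ℚ)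
      - (n:ℚ) * (p:ℚ)^2 * (Ph p a n : ℚ)) := by
    have h4 : (p:ℤ)^4 ∣ ((a:ℤ)^n * (Sn (p^2) n : ℤ) - (Sn (p^2) n : ℤ)
        - n * (p:ℤ)^2 * Ph p a n) := by
      rw [show (p:ℤ)^4 = ((p:ℤ)^2)^2 by ring]
      exact voronoi_int hcop n
    have := NB_of_dvd h4
    push_cast at this
    exact this
  have hZ2 : NB p 4 (((a:ℚ)^n - 1) * (((Sn (p^2) n : ℕ):ℚ) - (p:ℚ)^2 * bernoulli n)) := by
    have hint : NB p 0 (((a^n - 1 : ℤ) : ℚ)) := NB_int _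
    push_cast at hint
    exact NB.mono (by norm_num) (hint.mul hD)
  have hZ3 : NB p 4 ((n:ℚ) * (p:ℚ)^2 * ((Ph p a n : ℚ) - (Ps p a t : ℚ))) := by
    have h1 : NB p 2 (((Ph p a n - Ps p a t : ℤ) : ℚ)) := NB_of_dvd (phi_psi t n hn1)
    push_cast at h1
    exact NB.mono (by norm_num) (((NB_nat n).mul (NB_pPow 2)).mul h1)
  have hZ4 : NB p 4 ((n:ℚ) * (p:ℚ)^2 * ((Ps p a t : ℚ)
      - ((Ps p a 0 : ℚ) + (t:ℚ) * (Yi p a : ℚ)))) := by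
    have h1 : NB p 2 (((Ps p a t - (Ps p a 0 + t * Yi p a) : ℤ) : ℚ)) :=
      NB_of_dvd (psi_structure h11 t)
    push_cast at h1
    exact NB.mono (by norm_num) (((NB_nat n).mul (NB_pPow 2)).mul h1)
  have hcomb := ((hZ1.sub hZ2).add hZ3).add hZ4
  have he : ((a:ℚ)^n * ((Sn (p^2) n : ℕ):ℚ) - ((Sn (p^2) n : ℕ):ℚ)
        - (n:ℚ) * (p:ℚ)^2 * (Ph p a n : ℚ))
      - (((a:ℚ)^n - 1) * (((Sn (p^2) n : ℕ):ℚ) - (p:ℚ)^2 * bernoulli n))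
      + ((n:ℚ) * (p:ℚ)^2 * ((Ph p a n : ℚ) - (Ps p a t : ℚ)))
      + ((n:ℚ) * (p:ℚ)^2 * ((Ps p a t : ℚ) - ((Ps p a 0 : ℚ) + (t:ℚ) * (Yi p a : ℚ))))
      = (p:ℚ)^2 * (((a:ℚ)^n - 1) * bernoulli n
          - (n:ℚ) * ((Ps p a 0 : ℚ) + (t:ℚ) * (Yi p a : ℚ))) := by
    ring
  rw [he] at hcomb
  have hdiv := NB_div_pPow (p := p) 2 hcomb
  have hp0 : ((p:ℚ))^2 ≠ 0 := by
    have := pQ_pos (p := p)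
    positivity
  rw [mul_comm, mul_div_assoc, div_self hp0, mul_one] at hdiv
  exact NB.mono (by norm_num) hdiv


theorem main (h11 : 11 ≤ p) :
    NB p 2 (bernoulli (p - 5 + (p-1)*(p-1))
      - ((18*(p:ℚ)+40)/25 * bernoulli (p-5) - (7*(p:ℚ)+12)/18 * bernoulli (p-5+(p-1)))) := by
  have h5p : (5:ℕ) ≤ p := by omega
  have h1p : (1:ℕ) ≤ p := by omega
  have hP11 : (11:ℚ) ≤ (p:ℚ) := by exact_mod_cast h11
  -- choose the base a : a primitive root mod p
  obtain ⟨g, hg⟩ := IsCyclic.exists_generator (α := (ZMod p)ˣ)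
  have horder : orderOf g = p - 1 := by
    rw [orderOf_eq_card_of_forall_mem_zpowers hg, Nat.card_eq_fintype_card, ZMod.card_units p]
  set u : ZMod p := (g : ZMod p) with hu
  set a : ℕ := u.val with ha
  have hau : ((a : ℕ) : ZMod p) = u := ZMod.natCast_rightInverse u
  have hu0 : u ≠ 0 := g.ne_zero
  have hpa : ¬ p ∣ a := by
    intro hdvd
    have h0 : ((a : ℕ) : ZMod p) = 0 := (ZMod.natCast_eq_zero_iff a p).mpr hdvd
    rw [hau] at h0
    exact hu0 h0
  have hpaZ : ¬ (p:ℤ) ∣ (a:ℤ) := by exact_mod_cast hpa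
  have hum1 : u ^ (p - 5) ≠ 1 := by
    intro h1
    have hdvd : orderOf g ∣ p - 5 := orderOf_dvd_of_pow_eq_one (Units.ext (by
      rw [Units.val_pow_eq_pow_val, Units.val_one]; exact h1))
    rw [horder] at hdvd
    have := Nat.le_of_dvd (by omega) hdvd
    omega
  have hup : u ^ (p - 1) = 1 := ZMod.pow_card_sub_one_eq_one hu0
  have hunit : ∀ t : ℕ, ¬ (p:ℤ) ∣ ((a:ℤ)^(p - 5 + t*(p-1)) - 1) := by
    intro t hdvd
    have h0 : (((a:ℤ)^(p - 5 + t*(p-1)) - 1 : ℤ) : ZMod p) = 0 :=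
      (ZMod.intCast_zmod_eq_zero_iff_dvd _ p).mpr hdvd
    push_cast at h0
    rw [hau, pow_add, mul_comm t (p-1), pow_mul, hup, one_pow, mul_one] at h0
    exact hum1 (sub_eq_zero.mp h0)
  -- glue facts
  have hF1 := glue (p := p) h11 hpa 0
  have hF2 := glue (p := p) h11 hpa 1
  have hF3 := glue (p := p) h11 hpa (p-1)
  simp only [zero_mul, add_zero, Nat.cast_zero] at hF1
  simp only [one_mul, Nat.cast_one] at hF2
  -- cast rewrites
  have hm1 : ((p - 5 : ℕ) : ℚ) = (p:ℚ) - 5 := by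
    rw [Nat.cast_sub h5p]; norm_num
  have hm2 : ((p - 5 + (p - 1) : ℕ) : ℚ) = 2*(p:ℚ) - 6 := by
    rw [Nat.cast_add, Nat.cast_sub h5p, Nat.cast_sub h1p]; push_cast; ring
  have hpm1 : ((p - 1 : ℕ) : ℚ) = (p:ℚ) - 1 := by
    rw [Nat.cast_sub h1p]; norm_num
  have hM : ((p - 5 + (p - 1)*(p - 1) : ℕ) : ℚ) = (p:ℚ)^2 - (p:ℚ) - 4 := by
    rw [Nat.cast_add, Nat.cast_sub h5p, Nat.cast_mul, Nat.cast_sub h1p]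
    push_cast; ring
  rw [hm1] at hF1
  rw [hm2] at hF2
  rw [hM, hpm1] at hF3
  -- abbreviations
  set XQ : ℚ := ((Ps p a 0 : ℚ)) with hXQ
  set YQ : ℚ := ((Yi p a : ℚ)) with hYQ
  set B1 : ℚ := bernoulli (p - 5) with hB1def
  set B2 : ℚ := bernoulli (p - 5 + (p - 1)) with hB2def
  set BM : ℚ := bernoulli (p - 5 + (p - 1) * (p - 1)) with hBMdef
  set w : ℚ := (a:ℚ)^(p - 5) - 1 with hwdef
  set d : ℚ := (a:ℚ)^(p - 5) * ((a:ℚ)^(p - 1) - 1) with hddef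
  -- basic norm facts
  have hwcast : w = (((a^(p-5) - 1 : ℤ)) : ℚ) := by rw [hwdef]; push_cast; ring
  have hwint : ¬ (p:ℤ) ∣ ((a:ℤ)^(p-5) - 1) := by
    have := hunit 0
    simpa using this
  have hw1 : padicNorm p w = 1 := by rw [hwcast]; exact norm_int_eq_one hwint
  have hwd : w + d = (a:ℚ)^(p - 5 + (p-1)) - 1 := by rw [hwdef, hddef, pow_add]; ring
  have hwd1 : padicNorm p (w + d) = 1 := by
    rw [show w + d = (((a^(p - 5 + (p-1)) - 1 : ℤ)) : ℚ) by rw [hwd]; push_cast; ring]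
    exact norm_int_eq_one (by simpa using hunit 1)
  have hwM1 : padicNorm p ((a:ℚ)^(p - 5 + (p-1)*(p-1)) - 1) = 1 := by
    rw [show (a:ℚ)^(p - 5 + (p-1)*(p-1)) - 1 = (((a^(p - 5 + (p-1)*(p-1)) - 1 : ℤ)) : ℚ) by
      push_cast; ring]
    exact norm_int_eq_one (hunit (p-1))
  have hNd : NB p 1 d := by
    have hdint : (p:ℤ)^1 ∣ ((a:ℤ)^(p-5) * ((a:ℤ)^(p-1) - 1)) := by
      rw [pow_one]; exact ((fermat_int hpaZ).mul_left _)
    have hthis := NB_of_dvd hdint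
    push_cast at hthis
    rw [hddef]
    exact hthis
  have hNY : NB p 1 YQ := by
    have hdY : (p:ℤ)^1 ∣ Yi p a := by rw [pow_one]; exact Y_dvd (a := a) h11
    have hthis := NB_of_dvd hdY
    rw [hYQ]
    exact hthis
  have hNX : NB p 0 XQ := by rw [hXQ]; exact NB_int _
  have hNw : NB p 0 w := by rw [hwcast]; exact NB_int _
  -- unit norms of denominators
  have hnm1 : padicNorm p ((p:ℚ) - 5) = 1 := by
    rw [show (p:ℚ) - 5 = (((p - 5 : ℕ) : ℤ) : ℚ) by push_cast [Nat.cast_sub h5p]; ring]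
    refine norm_int_eq_one ?_
    intro hdvd
    have h2 : p ∣ (p - 5) := by exact_mod_cast hdvd
    have := Nat.le_of_dvd (by omega) h2
    omega
  have hnm2 : padicNorm p (2*(p:ℚ) - 6) = 1 := by
    rw [show 2*(p:ℚ) - 6 = (((p - 5 + (p - 1) : ℕ) : ℤ) : ℚ) by
      push_cast [Nat.cast_sub h5p, Nat.cast_sub h1p]; ring]
    refine norm_int_eq_one ?_
    intro hdvd
    have h2 : p ∣ (p - 5 + (p - 1)) := by exact_mod_cast hdvd
    obtain ⟨c, hc⟩ := h2
    have hlt : p * c < p * 2 := by omega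
    have hcc : c < 2 := Nat.lt_of_mul_lt_mul_left hlt
    interval_cases c <;> omega
  have hn9 : padicNorm p (9:ℚ) = 1 := by
    rw [show (9:ℚ) = (((9:ℤ)) : ℚ) by norm_num]
    refine norm_int_eq_one ?_
    intro hdvd
    have h2 : p ∣ 9 := by exact_mod_cast hdvd
    have h9 : (3:ℕ)^2 = 9 := by norm_num
    have h3 : p ∣ 3 := hp.out.dvd_of_dvd_pow (h9 ▸ h2)
    have := Nat.le_of_dvd (by norm_num) h3
    omega
  have hn225 : padicNorm p (225:ℚ) = 1 := by
    rw [show (225:ℚ) = (((225:ℤ)) : ℚ) by norm_num]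
    refine norm_int_eq_one ?_
    intro hdvd
    have h2 : p ∣ 225 := by exact_mod_cast hdvd
    have h2' : p ∣ 3^2 * 5^2 := by
      have h99 : (3^2 * 5^2 : ℕ) = 225 := by norm_num
      rw [h99]; exact h2
    rcases (Nat.Prime.dvd_mul hp.out).mp h2' with h3 | h3
    · have := Nat.le_of_dvd (by norm_num) (hp.out.dvd_of_dvd_pow h3)
      omega
    · have := Nat.le_of_dvd (by norm_num) (hp.out.dvd_of_dvd_pow h3)
      omega
  -- bootstraps
  have hbB1 : NB p 0 B1 := by
    refine NB_unit_cancel hw1 ?_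
    have h1 := hF1.mono (show (0:ℤ) ≤ 2 by norm_num)
    have h2 : NB p 0 (((p:ℚ) - 5) * XQ) := by
      have hA : NB p 0 ((p:ℚ) - 5) := by
        have hthis := NB_int (p := p) ((p:ℤ) - 5); push_cast at hthis; exact hthis
      refine NB.mono (by norm_num) (hA.mul hNX)
    have h3 := h1.add h2
    rwa [show w * B1 - ((p:ℚ) - 5) * XQ + ((p:ℚ) - 5) * XQ = w * B1 by ring] at h3
  have hF2' : NB p 2 ((w + d) * B2 - (2*(p:ℚ) - 6) * (XQ + YQ)) := by rw [hwd]; exact hF2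
  have hbB2 : NB p 0 B2 := by
    refine NB_unit_cancel hwd1 ?_
    have h1 := hF2'.mono (show (0:ℤ) ≤ 2 by norm_num)
    have h2 : NB p 0 ((2*(p:ℚ) - 6) * (XQ + YQ)) := by
      have hA : NB p 0 (2*(p:ℚ) - 6) := by
        have hthis := NB_int (p := p) (2*(p:ℤ) - 6); push_cast at hthis; exact hthis
      exact NB.mono (by norm_num) (hA.mul (hNX.add (hNY.mono (show (0:ℤ) ≤ 1 by norm_num))))
    have h3 := h1.add h2
    rwa [show (w + d) * B2 - (2*(p:ℚ) - 6) * (XQ + YQ) + (2*(p:ℚ) - 6) * (XQ + YQ)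
      = (w + d) * B2 by ring] at h3
  have hbBM : NB p 0 BM := by
    refine NB_unit_cancel hwM1 ?_
    have h1 := hF3.mono (show (0:ℤ) ≤ 2 by norm_num)
    have h2 : NB p 0 (((p:ℚ)^2 - (p:ℚ) - 4) * (XQ + ((p:ℚ) - 1) * YQ)) := by
      have hA : NB p 0 ((p:ℚ)^2 - (p:ℚ) - 4) := by
        have hthis := NB_int (p := p) ((p:ℤ)^2 - p - 4); push_cast at hthis; exact hthis
      have hB : NB p 0 (XQ + ((p:ℚ) - 1) * YQ) := by
        refine hNX.add ?_
        have hC : NB p 0 ((p:ℚ) - 1) := by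
          have hthis := NB_int (p := p) ((p:ℤ) - 1); push_cast at hthis; exact hthis
        exact NB.mono (by norm_num) (hC.mul (hNY.mono (show (0:ℤ) ≤ 1 by norm_num)))
      exact NB.mono (by norm_num) (hA.mul hB)
    have h3 := h1.add h2
    rwa [show ((a:ℚ)^(p - 5 + (p-1)*(p-1)) - 1) * BM
        - ((p:ℚ)^2 - (p:ℚ) - 4) * (XQ + ((p:ℚ) - 1) * YQ)
        + ((p:ℚ)^2 - (p:ℚ) - 4) * (XQ + ((p:ℚ) - 1) * YQ)
      = ((a:ℚ)^(p - 5 + (p-1)*(p-1)) - 1) * BM by ring] at h3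
  -- replace the F3 coefficient
  have hD2 : NB p 2 (((a:ℚ)^(p - 5 + (p-1)*(p-1)) - 1) - (w + ((p:ℚ) - 1)*d)) := by
    have hb := binom2 ((a:ℤ)^(p-1) - 1) 1 (p-1)
    have hx2 : (p:ℤ)^2 ∣ ((a:ℤ)^(p-1) - 1)^2 := by
      obtain ⟨c, hc⟩ := fermat_int hpaZ
      exact ⟨c^2, by rw [hc]; ring⟩
    have hdd := (dvd_trans hx2 hb).mul_left ((a:ℤ)^(p-5))
    have hthis := NB_of_dvd (p := p) (k := 2) hdd
    have heq : (((a:ℤ)^(p-5) * (((a:ℤ)^(p-1) - 1 + 1)^(p-1) - 1^(p-1)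
          - ((p-1:ℕ):ℤ) * 1^((p-1) - 1) * ((a:ℤ)^(p-1) - 1)) : ℤ) : ℚ)
        = ((a:ℚ)^(p - 5 + (p-1)*(p-1)) - 1) - (w + ((p:ℚ) - 1)*d) := by
      rw [hwdef, hddef]
      push_cast [hpm1]
      rw [pow_add, pow_mul]
      ring
    rwa [heq] at hthis
  have hF3' : NB p 2 ((w + ((p:ℚ) - 1)*d) * BM
      - ((p:ℚ)^2 - (p:ℚ) - 4) * (XQ + ((p:ℚ) - 1)*YQ)) := by
    have h1 := hF3.sub (NB.mono (by norm_num) (hD2.mul hbBM))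
    rwa [show (((a:ℚ)^(p - 5 + (p-1)*(p-1)) - 1) * BM
          - ((p:ℚ)^2 - (p:ℚ) - 4) * (XQ + ((p:ℚ) - 1)*YQ))
        - ((((a:ℚ)^(p - 5 + (p-1)*(p-1)) - 1) - (w + ((p:ℚ) - 1)*d)) * BM)
      = (w + ((p:ℚ) - 1)*d) * BM - ((p:ℚ)^2 - (p:ℚ) - 4) * (XQ + ((p:ℚ) - 1)*YQ) by
        ring] at h1
  -- Kummer mod p
  have hK1 : NB p 1 (w * B2 - (2*(p:ℚ) - 6) * XQ) := by
    have h1 := hF2'.mono (show (1:ℤ) ≤ 2 by norm_num)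
    have h2 : NB p 1 (d * B2) := NB.mono (by norm_num) (hNd.mul hbB2)
    have h3 : NB p 1 ((2*(p:ℚ) - 6) * YQ) := by
      have hA : NB p 0 (2*(p:ℚ) - 6) := by
        have hthis := NB_int (p := p) (2*(p:ℤ) - 6); push_cast at hthis; exact hthis
      exact NB.mono (by norm_num) (hA.mul hNY)
    have h4 := (h1.sub h2).add h3
    rwa [show ((w + d) * B2 - (2*(p:ℚ) - 6) * (XQ + YQ)) - d * B2 + (2*(p:ℚ) - 6) * YQ
      = w * B2 - (2*(p:ℚ) - 6) * XQ by ring] at h4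
  have hK2 : NB p 1 (w * B1 - ((p:ℚ) - 5) * XQ) := hF1.mono (by norm_num)
  have hm1ne : ((p:ℚ) - 5) ≠ 0 := by intro h; linarith
  have hm2ne : (2*(p:ℚ) - 6) ≠ 0 := by intro h; linarith
  have hK : NB p 1 (B2/(2*(p:ℚ) - 6) - B1/((p:ℚ) - 5)) := by
    refine NB_unit_cancel hw1 ?_
    have h1 := NB_div_unit hnm2 hK1
    have h2 := NB_div_unit hnm1 hK2
    have h3 := h1.sub h2
    rwa [show (w * B2 - (2*(p:ℚ) - 6) * XQ)/(2*(p:ℚ) - 6)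
        - (w * B1 - ((p:ℚ) - 5) * XQ)/((p:ℚ) - 5)
      = w * (B2/(2*(p:ℚ) - 6) - B1/((p:ℚ) - 5)) by field_simp; ring] at h3
  -- scalar norms
  have hNwpd : NB p 0 (w + ((p:ℚ) - 1)*d) := by
    refine hNw.add ?_
    have hC : NB p 0 ((p:ℚ) - 1) := by
      have hthis := NB_int (p := p) ((p:ℤ) - 1); push_cast at hthis; exact hthis
    exact NB.mono (by norm_num) (hC.mul (hNd.mono (show (0:ℤ) ≤ 1 by norm_num)))
  have hgam : NB p 2 ((238:ℚ) * (p:ℚ)^2 / 225) := by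
    refine NB_div_unit hn225 ?_
    have h238 : NB p 0 (238:ℚ) := by
      have hthis := NB_int (p := p) 238; push_cast at hthis; exact hthis
    exact NB.mono (by norm_num) (h238.mul (NB_pPow 2))
  have hlam : NB p 1 ((p:ℚ) * ((9*(p:ℚ)^2 - 11*(p:ℚ) - 36)/9)) := by
    have hpp : NB p 1 ((p:ℚ)) := by
      have hthis := NB_pPow (p := p) 1
      rwa [pow_one] at hthis
    have hin : NB p 0 ((9*(p:ℚ)^2 - 11*(p:ℚ) - 36)/9) := by
      refine NB_div_unit hn9 ?_
      have hthis := NB_int (p := p) (9*(p:ℤ)^2 - 11*p - 36); push_cast at hthis; exact hthis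
    exact NB.mono (by norm_num) (hpp.mul hin)
  have hmu : NB p 0 ((16*(p:ℚ)^2 - 18*(p:ℚ) - 72)/9) := by
    refine NB_div_unit hn9 ?_
    have hthis := NB_int (p := p) (16*(p:ℤ)^2 - 18*p - 72); push_cast at hthis; exact hthis
  -- master identity
  set G : ℚ := BM - ((18*(p:ℚ)+40)/25 * B1 - (7*(p:ℚ)+12)/18 * B2) with hGdef
  have hmaster : (w + ((p:ℚ) - 1)*d) * G
      = ((w + ((p:ℚ) - 1)*d) * BM - ((p:ℚ)^2 - (p:ℚ) - 4) * (XQ + ((p:ℚ) - 1)*YQ))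
        + (((p:ℚ)^2 - (p:ℚ) - 4)*((p:ℚ) - 2)/((p:ℚ) - 5)) * (w * B1 - ((p:ℚ) - 5) * XQ)
        - (((p:ℚ)^2 - (p:ℚ) - 4)*((p:ℚ) - 1)/(2*(p:ℚ) - 6))
            * ((w + d) * B2 - (2*(p:ℚ) - 6) * (XQ + YQ))
        + ((w + ((p:ℚ) - 1)*d) * ((238:ℚ) * (p:ℚ)^2 / 225)) * (B1/((p:ℚ) - 5))
        + (w * ((p:ℚ) * ((9*(p:ℚ)^2 - 11*(p:ℚ) - 36)/9))
            + ((p:ℚ) - 1)*d*((16*(p:ℚ)^2 - 18*(p:ℚ) - 72)/9))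
            * (B2/(2*(p:ℚ) - 6) - B1/((p:ℚ) - 5)) := by
    rw [hGdef]
    have h3 : (p:ℚ) - 3 ≠ 0 := by intro h; apply hm2ne; linarith
    rw [show 2*(p:ℚ) - 6 = 2*((p:ℚ)-3) by ring]
    field_simp
    ring
  have hbig : NB p 2 ((w + ((p:ℚ) - 1)*d) * G) := by
    rw [hmaster]
    have hT2 : NB p 2 ((((p:ℚ)^2 - (p:ℚ) - 4)*((p:ℚ) - 2)/((p:ℚ) - 5))
        * (w * B1 - ((p:ℚ) - 5) * XQ)) := by
      have hc : NB p 0 (((p:ℚ)^2 - (p:ℚ) - 4)*((p:ℚ) - 2)/((p:ℚ) - 5)) := by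
        refine NB_div_unit hnm1 ?_
        have hthis := NB_int (p := p) (((p:ℤ)^2 - p - 4)*((p:ℤ) - 2))
        push_cast at hthis; exact hthis
      exact NB.mono (by norm_num) (hc.mul hF1)
    have hT3 : NB p 2 ((((p:ℚ)^2 - (p:ℚ) - 4)*((p:ℚ) - 1)/(2*(p:ℚ) - 6))
        * ((w + d) * B2 - (2*(p:ℚ) - 6) * (XQ + YQ))) := by
      have hc : NB p 0 (((p:ℚ)^2 - (p:ℚ) - 4)*((p:ℚ) - 1)/(2*(p:ℚ) - 6)) := by
        refine NB_div_unit hnm2 ?_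
        have hthis := NB_int (p := p) (((p:ℤ)^2 - p - 4)*((p:ℤ) - 1))
        push_cast at hthis; exact hthis
      exact NB.mono (by norm_num) (hc.mul hF2')
    have hT4 : NB p 2 (((w + ((p:ℚ) - 1)*d) * ((238:ℚ) * (p:ℚ)^2 / 225)) * (B1/((p:ℚ) - 5))) := by
      exact NB.mono (by norm_num) ((hNwpd.mul hgam).mul (NB_div_unit hnm1 hbB1))
    have hT5 : NB p 2 ((w * ((p:ℚ) * ((9*(p:ℚ)^2 - 11*(p:ℚ) - 36)/9))
        + ((p:ℚ) - 1)*d*((16*(p:ℚ)^2 - 18*(p:ℚ) - 72)/9))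
        * (B2/(2*(p:ℚ) - 6) - B1/((p:ℚ) - 5))) := by
      have hco : NB p 1 (w * ((p:ℚ) * ((9*(p:ℚ)^2 - 11*(p:ℚ) - 36)/9))
          + ((p:ℚ) - 1)*d*((16*(p:ℚ)^2 - 18*(p:ℚ) - 72)/9)) := by
        refine NB.add (NB.mono (by norm_num) (hNw.mul hlam)) ?_
        have hC : NB p 0 ((p:ℚ) - 1) := by
          have hthis := NB_int (p := p) ((p:ℤ) - 1); push_cast at hthis; exact hthis
        exact NB.mono (by norm_num) ((hC.mul hNd).mul hmu)
      exact NB.mono (by norm_num) (hco.mul hK)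
    exact (((hF3'.add hT2).sub hT3).add hT4).add hT5
  have hwpd1 : padicNorm p (w + ((p:ℚ) - 1)*d) = 1 := by
    rw [show w + ((p:ℚ) - 1)*d
        = ((((a:ℤ)^(p-5) - 1) + ((p:ℤ) - 1)*((a:ℤ)^(p-5)*((a:ℤ)^(p-1) - 1)) : ℤ) : ℚ) by
      rw [hwdef, hddef]; push_cast; ring]
    refine norm_int_eq_one ?_
    intro hdvd
    have h2 : (p:ℤ) ∣ ((p:ℤ) - 1)*((a:ℤ)^(p-5)*((a:ℤ)^(p-1) - 1)) :=
      ((fermat_int hpaZ).mul_left _).mul_left _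
    have h3 : (p:ℤ) ∣ ((a:ℤ)^(p-5) - 1) := by
      have h4 := dvd_sub hdvd h2
      simpa using h4
    exact hwint h3
  have hGN := NB_unit_cancel hwpd1 hbig
  rw [hGdef] at hGN
  exact hGN

end K18

theorem stmt18 (p : ℕ) (hp : p.Prime) (h11 : 11 ≤ p) :
    PadicCong p 2 (bernoulli (p ^ 2 - p - 4))
      ((18 * (p : ℚ) + 40) / 25 * bernoulli (p - 5)
        - (7 * (p : ℚ) + 12) / 18 * bernoulli (2 * p - 6)) := by
  haveI := Fact.mk hp
  have h := K18.main (p := p) h11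
  have e1 : p - 5 + (p-1)*(p-1) = p^2 - p - 4 := by
    have h2 : p ≤ p^2 := by nlinarith
    zify [h11, show 5 ≤ p by omega, show 1 ≤ p by omega, h2,
      show 4 ≤ p^2 - p by nlinarith [Nat.sub_add_cancel h2]]
    ring
  have e2 : p - 5 + (p-1) = 2*p - 6 := by omega
  rw [e1, e2] at h
  unfold PadicCong
  exact h
end

section
/- For any prime p ≥ 11, C(2p-1, p-1) ≡ 1 + pH₁ + p²H₂ + p³H₃ + p⁴H₄ + p⁵H₅ + p⁶H₆ (mod p⁸), where H_n = H_n(p) = ∑_{1≤i₁<⋯<i_n≤p-1} 1/(i₁⋯i_n). -/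
open Finset

/-- `n`-th elementary symmetric function of `1, 1/2, …, 1/(p-1)`. -/
def Hsym (p n : ℕ) : ℚ :=
  ∑ s ∈ (Finset.Icc 1 (p - 1)).powersetCard n, ∏ i ∈ s, (1 : ℚ) / i

lemma padicNorm_prod {p : ℕ} [Fact p.Prime] {α : Type*} (S : Finset α) (f : α → ℚ) :
    padicNorm p (∏ i ∈ S, f i) = ∏ i ∈ S, padicNorm p (f i) := by
  induction S using Finset.cons_induction with
  | empty => simp [padicNorm.one]
  | cons a s h ih => rw [Finset.prod_cons, padicNorm.mul, ih, Finset.prod_cons]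

lemma norm_nat_one {p : ℕ} [Fact p.Prime] {i : ℕ} (h1 : 1 ≤ i) (h2 : i < p) :
    padicNorm p (i : ℚ) = 1 := by
  rw [padicNorm.nat_eq_one_iff]
  intro hdvd
  have := Nat.le_of_dvd (by omega) hdvd
  omega

lemma norm_inv_one {p : ℕ} [Fact p.Prime] {i : ℕ} (h1 : 1 ≤ i) (h2 : i < p) :
    padicNorm p ((1:ℚ)/(i:ℚ)) = 1 := by
  rw [padicNorm.div, padicNorm.one, norm_nat_one h1 h2]; norm_num

lemma Hsym_norm_le (p n : ℕ) (hp : p.Prime) : padicNorm p (Hsym p n) ≤ 1 := by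
  haveI := Fact.mk hp
  apply padicNorm.sum_le' _ zero_le_one
  intro S hS
  rw [padicNorm_prod]
  refine Finset.prod_le_one (fun i _ => padicNorm.nonneg _) ?_
  intro i hi
  have hi' : i ∈ Finset.Icc 1 (p-1) := (Finset.mem_powersetCard.1 hS).1 hi
  rw [Finset.mem_Icc] at hi'
  exact le_of_eq (norm_inv_one hi'.1 (by omega))

lemma prod_shift (p : ℕ) : ∀ n, (∏ k ∈ Finset.Icc 1 n, (p + k)) * p.factorial = (p + n).factorial := by
  intro n
  induction n with
  | zero => simp
  | succ n ih =>
    rw [← Finset.insert_Icc_right_eq_Icc_add_one (by omega : 1 ≤ n + 1),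
        Finset.prod_insert (by simp), mul_assoc, ih,
        show p + (n+1) = (p + n) + 1 by omega, Nat.factorial_succ]

lemma Hsym7_norm (p : ℕ) (hp : p.Prime) (h11 : 11 ≤ p) :
    padicNorm p (Hsym p 7) ≤ ((p : ℚ))⁻¹ := by
  haveI := Fact.mk hp
  classical
  set σ : Finset ℕ → Finset ℕ := fun S => S.image (fun i => p - i) with hσdef
  have hmemIcc : ∀ S ∈ (Finset.Icc 1 (p-1)).powersetCard 7, ∀ i ∈ S, 1 ≤ i ∧ i ≤ p - 1 := by
    intro S hS i hi
    have := (Finset.mem_powersetCard.1 hS).1 hi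
    simpa [Finset.mem_Icc] using this
  have hσF : ∀ S ∈ (Finset.Icc 1 (p-1)).powersetCard 7,
      σ S ∈ (Finset.Icc 1 (p-1)).powersetCard 7 := by
    intro S hS
    rw [Finset.mem_powersetCard]
    constructor
    · intro j hj
      rcases Finset.mem_image.1 hj with ⟨i, hi, rfl⟩
      have h := hmemIcc S hS i hi
      rw [Finset.mem_Icc]; omega
    · rw [hσdef, Finset.card_image_of_injOn, (Finset.mem_powersetCard.1 hS).2]
      intro i hi j hj h
      have h1 := hmemIcc S hS i hi; have h2 := hmemIcc S hS j hj
      simp only at h; omega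
  have hσσ : ∀ S ∈ (Finset.Icc 1 (p-1)).powersetCard 7, σ (σ S) = S := by
    intro S hS
    ext j
    simp only [hσdef, Finset.mem_image]
    constructor
    · rintro ⟨i, ⟨k, hk, rfl⟩, rfl⟩
      have := hmemIcc S hS k hk
      simpa [show p - (p - k) = k by omega] using hk
    · intro hj
      have := hmemIcc S hS j hj
      exact ⟨p - j, ⟨j, hj, rfl⟩, by omega⟩
  have hpair : ∀ S ∈ (Finset.Icc 1 (p-1)).powersetCard 7,
      padicNorm p ((∏ i ∈ S, (1:ℚ)/i) + (∏ i ∈ σ S, (1:ℚ)/i)) ≤ (p:ℚ)⁻¹ := by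
    intro S hS
    have hcard : S.card = 7 := (Finset.mem_powersetCard.1 hS).2
    set a : ℕ := ∏ i ∈ S, i with ha
    set b : ℕ := ∏ i ∈ S, (p - i) with hb
    have hane : a ≠ 0 := Finset.prod_ne_zero_iff.2
      (fun i hi => by have := hmemIcc S hS i hi; omega)
    have hbne : b ≠ 0 := Finset.prod_ne_zero_iff.2
      (fun i hi => by have := hmemIcc S hS i hi; omega)
    have hfa : (∏ i ∈ S, (1:ℚ)/i) = (a:ℚ)⁻¹ := by
      rw [ha]; push_cast
      rw [← Finset.prod_inv_distrib]
      simp [one_div]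
    have hfb : (∏ i ∈ σ S, (1:ℚ)/i) = (b:ℚ)⁻¹ := by
      rw [hσdef]
      rw [Finset.prod_image (fun i hi j hj h => by
        have := hmemIcc S hS i hi; have := hmemIcc S hS j hj; omega)]
      rw [hb]; push_cast
      rw [← Finset.prod_inv_distrib]
      simp [one_div]
    have hdvd : p ∣ a + b := by
      rw [← ZMod.natCast_eq_zero_iff]
      push_cast [ha, hb]
      have hcast : ∀ i ∈ S, ((p - i : ℕ) : ZMod p) = - (i : ZMod p) := by
        intro i hi
        have h := hmemIcc S hS i hi
        rw [Nat.cast_sub (by omega)]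
        simp
      rw [Finset.prod_congr rfl hcast]
      have : ∀ i ∈ S, -(i : ZMod p) = (-1) * (i : ZMod p) := fun i _ => by ring
      rw [Finset.prod_congr rfl this, Finset.prod_mul_distrib, Finset.prod_const, hcard]
      ring
    obtain ⟨m, hm⟩ := hdvd
    have hsum : (∏ i ∈ S, (1:ℚ)/i) + (∏ i ∈ σ S, (1:ℚ)/i)
        = ((a + b : ℕ):ℚ) / ((a:ℚ) * b) := by
      rw [hfa, hfb]; push_cast
      have ha0 : (a:ℚ) ≠ 0 := Nat.cast_ne_zero.2 hane
      have hb0 : (b:ℚ) ≠ 0 := Nat.cast_ne_zero.2 hbne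
      field_simp
      ring
    have hnp : ¬ p ∣ a := by
      intro h
      rcases (Nat.Prime.prime hp).dvd_finset_prod_iff _ |>.1 h with ⟨i, hi, hdvd'⟩
      have h1 := hmemIcc S hS i hi
      have := Nat.le_of_dvd (by omega) hdvd'
      omega
    have hnpb : ¬ p ∣ b := by
      intro h
      rcases (Nat.Prime.prime hp).dvd_finset_prod_iff _ |>.1 h with ⟨i, hi, hdvd'⟩
      have h1 := hmemIcc S hS i hi
      have := Nat.le_of_dvd (by omega) hdvd'
      omega
    rw [hsum, hm]
    push_cast
    rw [padicNorm.div, padicNorm.mul, padicNorm.mul,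
        (padicNorm.nat_eq_one_iff a).2 hnp, (padicNorm.nat_eq_one_iff b).2 hnpb,
        padicNorm.padicNorm_p (by omega)]
    rw [mul_one, div_one]
    calc (p:ℚ)⁻¹ * padicNorm p (m:ℚ) ≤ (p:ℚ)⁻¹ * 1 := by
          apply mul_le_mul_of_nonneg_left (padicNorm.of_nat m)
          exact inv_nonneg.2 (Nat.cast_nonneg p)
      _ = (p:ℚ)⁻¹ := mul_one _
  have hreidx : Hsym p 7 = ∑ S ∈ (Finset.Icc 1 (p-1)).powersetCard 7,
      ∏ i ∈ σ S, (1:ℚ)/i := by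
    unfold Hsym
    refine Finset.sum_bij' (fun S _ => σ S) (fun S _ => σ S) hσF hσF hσσ hσσ ?_
    intro S hS
    rw [hσσ S hS]
  have hdouble : Hsym p 7 + Hsym p 7 = ∑ S ∈ (Finset.Icc 1 (p-1)).powersetCard 7,
      ((∏ i ∈ S, (1:ℚ)/i) + (∏ i ∈ σ S, (1:ℚ)/i)) := by
    rw [Finset.sum_add_distrib]
    nth_rewrite 2 [hreidx]
    rfl
  have h2 : padicNorm p (Hsym p 7 + Hsym p 7) ≤ (p:ℚ)⁻¹ := by
    rw [hdouble]
    exact padicNorm.sum_le' hpair (inv_nonneg.2 (Nat.cast_nonneg p))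
  have h2' : Hsym p 7 + Hsym p 7 = 2 * Hsym p 7 := by ring
  rw [h2', padicNorm.mul] at h2
  have hn2 : padicNorm p (2:ℚ) = 1 := by
    have := norm_nat_one (p := p) (i := 2) (by norm_num) (by omega)
    simpa using this
  rwa [hn2, one_mul] at h2

lemma padicNorm_pow {p : ℕ} [Fact p.Prime] (q : ℚ) (n : ℕ) :
    padicNorm p (q ^ n) = (padicNorm p q) ^ n := by
  induction n with
  | zero => simp [padicNorm.one]
  | succ n ih => rw [pow_succ, padicNorm.mul, ih, pow_succ]

theorem stmt19 (p : ℕ) (hp : p.Prime) (h11 : 11 ≤ p) :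
    PadicCong p 8 ((Nat.choose (2 * p - 1) (p - 1)) : ℚ)
      (1 + (p : ℚ) * Hsym p 1 + (p : ℚ) ^ 2 * Hsym p 2 + (p : ℚ) ^ 3 * Hsym p 3
        + (p : ℚ) ^ 4 * Hsym p 4 + (p : ℚ) ^ 5 * Hsym p 5
        + (p : ℚ) ^ 6 * Hsym p 6) := by
  haveI := Fact.mk hp
  classical
  have hfac : (((p-1).factorial : ℕ) : ℚ) ≠ 0 := Nat.cast_ne_zero.2 (Nat.factorial_ne_zero _)
  have hnat : Nat.choose (2*p-1) (p-1) * (p-1).factorial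
      = ∏ k ∈ Finset.Icc 1 (p-1), (p + k) := by
    have h1 := prod_shift p (p-1)
    rw [show p + (p-1) = 2*p-1 by omega] at h1
    have h2 := Nat.choose_mul_factorial_mul_factorial (show p-1 ≤ 2*p-1 by omega)
    rw [show 2*p-1-(p-1) = p by omega] at h2
    exact Nat.eq_of_mul_eq_mul_right (Nat.factorial_pos p) (h2.trans h1.symm)
  have hQ : ((Nat.choose (2*p-1) (p-1)) : ℚ)
      = (∏ k ∈ Finset.Icc 1 (p-1), ((p:ℚ) + k)) / (((p-1).factorial : ℕ) : ℚ) := by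
    rw [eq_div_iff hfac]
    have := congrArg (Nat.cast : ℕ → ℚ) hnat
    push_cast at this
    exact this
  have hfacprod : (((p-1).factorial : ℕ) : ℚ) = ∏ k ∈ Finset.Icc 1 (p-1), (k:ℚ) := by
    have := prod_shift 0 (p-1)
    simp only [Nat.factorial_zero, mul_one, zero_add] at this
    rw [← this]
    push_cast
    rfl
  have hprodform : (∏ k ∈ Finset.Icc 1 (p-1), ((p:ℚ) * (1/k) + 1))
      = ((Nat.choose (2*p-1) (p-1)) : ℚ) := by
    rw [hQ, hfacprod, ← Finset.prod_div_distrib]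
    apply Finset.prod_congr rfl
    intro k hk
    rw [Finset.mem_Icc] at hk
    have hk0 : (k:ℚ) ≠ 0 := Nat.cast_ne_zero.2 (by omega)
    field_simp
  have hexp : (∏ k ∈ Finset.Icc 1 (p-1), ((p:ℚ) * (1/k) + 1))
      = ∑ j ∈ Finset.range p, (p:ℚ)^j * Hsym p j := by
    rw [Finset.prod_add, Finset.powerset_card_disjiUnion]
    erw [Finset.sum_disjiUnion]
    rw [show (Finset.Icc 1 (p-1)).card = p - 1 by simp, show p - 1 + 1 = p by omega]
    apply Finset.sum_congr rfl
    intro j _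
    rw [Hsym, Finset.mul_sum]
    apply Finset.sum_congr rfl
    intro t ht
    have hct : t.card = j := (Finset.mem_powersetCard.1 ht).2
    rw [Finset.prod_mul_distrib, Finset.prod_const, hct, Finset.prod_const_one, mul_one]
  have hchoose : ((Nat.choose (2*p-1) (p-1)) : ℚ)
      = ∑ j ∈ Finset.range p, (p:ℚ)^j * Hsym p j := hprodform.symm.trans hexp
  have hH0 : Hsym p 0 = 1 := by simp [Hsym]
  have hRHS : (1 + (p : ℚ) * Hsym p 1 + (p : ℚ) ^ 2 * Hsym p 2 + (p : ℚ) ^ 3 * Hsym p 3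
        + (p : ℚ) ^ 4 * Hsym p 4 + (p : ℚ) ^ 5 * Hsym p 5
        + (p : ℚ) ^ 6 * Hsym p 6)
      = ∑ j ∈ Finset.range 7, (p:ℚ)^j * Hsym p j := by
    rw [Finset.sum_range_succ, Finset.sum_range_succ, Finset.sum_range_succ,
        Finset.sum_range_succ, Finset.sum_range_succ, Finset.sum_range_succ,
        Finset.sum_range_one, hH0]
    ring
  have hsplit : ∑ j ∈ Finset.range p, (p:ℚ)^j * Hsym p j
      - ∑ j ∈ Finset.range 7, (p:ℚ)^j * Hsym p j
      = ∑ j ∈ Finset.Ico 7 p, (p:ℚ)^j * Hsym p j := by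
    exact (Finset.sum_Ico_eq_sub (fun j => (p:ℚ)^j * Hsym p j) (by omega : 7 ≤ p)).symm
  unfold PadicCong
  rw [hchoose, hRHS, hsplit]
  have hppos : (0:ℚ) < (p:ℚ) := by exact_mod_cast (by omega : 0 < p)
  have hinv_nonneg : (0:ℚ) ≤ (p:ℚ)⁻¹ := inv_nonneg.2 hppos.le
  have htarget : ((p:ℚ)) ^ (-((8:ℕ):ℤ)) = ((p:ℚ)⁻¹)^8 := by
    rw [zpow_neg, zpow_natCast, ← inv_pow]
  apply padicNorm.sum_le'
  · intro j hj
    rw [Finset.mem_Ico] at hj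
    rw [padicNorm.mul, padicNorm_pow, padicNorm.padicNorm_p (by omega)]
    rw [htarget]
    rcases eq_or_lt_of_le hj.1 with h7 | h8
    · rw [← h7]
      calc ((p:ℚ)⁻¹)^7 * padicNorm p (Hsym p 7)
          ≤ ((p:ℚ)⁻¹)^7 * (p:ℚ)⁻¹ :=
            mul_le_mul_of_nonneg_left (Hsym7_norm p hp h11) (pow_nonneg hinv_nonneg 7)
        _ = ((p:ℚ)⁻¹)^8 := by ring
    · calc ((p:ℚ)⁻¹)^j * padicNorm p (Hsym p j)
          ≤ ((p:ℚ)⁻¹)^j * 1 :=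
            mul_le_mul_of_nonneg_left (Hsym_norm_le p j hp) (pow_nonneg hinv_nonneg j)
        _ = ((p:ℚ)⁻¹)^j := mul_one _
        _ ≤ ((p:ℚ)⁻¹)^8 := by
            apply pow_le_pow_of_le_one hinv_nonneg
            · rw [inv_le_one_iff₀]
              right
              exact_mod_cast (by omega : 1 ≤ p)
            · omega
  · rw [htarget]
    exact pow_nonneg hinv_nonneg 8
end
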